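/- arXiv:1403.7387 — 6 statements merged into one kernel-verified Lean document; each statement's English description precedes it below -/
import Mathlib

section
/- Let (Ω,F,P) be a probability space and σ : [0,∞) × Ω → [0,∞) a jointly measurable process such that: for every s ≥ 0 the law of σ_s equals the law of σ_0; E[σ_0²] < +∞; (1/h)∫_0^h (σ_s − σ_0)² ds → 0 in probability as h → 0⁺; and for each h > 0 the map ω ↦ sup_{0 ≤ t ≤ h} σ_t(ω) is measurable. Define A(q) := limsup_{h→0⁺} (log E[(∫_0^h σ_s² ds)^{q/2}]) / (log h). If the set {q ≥ 1 : −∞ < A(q) < q/2} has nonempty interior, then there exist h > 0 and p ≥ 2 such that E[σ_0^p] < +∞ but E[(sup_{0 ≤ t ≤ h} σ_t)^p] = +∞. -/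
open Filter MeasureTheory

open scoped ENNReal NNReal

namespace Stmt4Aux

lemma bot_div_neg {d : ℝ} (hd : d < 0) : (⊥ : EReal) / (d : EReal) = ⊤ :=
  EReal.bot_div_of_neg_ne_bot (by exact_mod_cast hd) (EReal.coe_ne_bot d)

lemma top_div_neg {d : ℝ} (hd : d < 0) : (⊤ : EReal) / (d : EReal) = ⊥ :=
  EReal.top_div_of_neg_ne_bot (by exact_mod_cast hd) (EReal.coe_ne_bot d)

lemma ediv_neg_lt_coe_iff (x : EReal) {c d : ℝ} (hd : d < 0) :
    x / (d : EReal) < (c : EReal) ↔ ((c * d : ℝ) : EReal) < x := by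
  induction x using EReal.rec with
  | bot =>
      rw [bot_div_neg hd]
      simp
  | coe r =>
      rw [← EReal.coe_div, EReal.coe_lt_coe_iff, EReal.coe_lt_coe_iff]
      exact div_lt_iff_of_neg hd
  | top =>
      rw [top_div_neg hd]
      exact ⟨fun _ => EReal.coe_lt_top _, fun _ => EReal.bot_lt_coe _⟩

noncomputable def JJ {Ω : Type*} (σ : ℝ → Ω → ℝ) (h : ℝ) (ω : Ω) : ℝ :=
  ∫ s in Set.Ioc (0:ℝ) h, (σ s ω) ^ 2

noncomputable def Ent {Ω : Type*} [MeasurableSpace Ω] (P : Measure Ω) (σ : ℝ → Ω → ℝ)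
    (q h : ℝ) : ℝ≥0∞ :=
  ∫⁻ ω, ENNReal.ofReal ((JJ σ h ω) ^ (q / 2)) ∂P

noncomputable def SS {Ω : Type*} (σ : ℝ → Ω → ℝ) (h : ℝ) (ω : Ω) : ℝ≥0∞ :=
  ⨆ t ∈ Set.Icc (0:ℝ) h, ENNReal.ofReal (σ t ω)

noncomputable def Mom {Ω : Type*} [MeasurableSpace Ω] (P : Measure Ω) (σ : ℝ → Ω → ℝ)
    (r : ℝ) : ℝ≥0∞ :=
  ∫⁻ ω, ENNReal.ofReal ((σ 0 ω) ^ r) ∂P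

lemma core {Ω : Type*} [MeasurableSpace Ω] (P : Measure Ω) (σ : ℝ → Ω → ℝ)
    (r : ℝ) (hr : 0 ≤ r) (D : ℝ≥0∞) (hD0 : D ≠ 0) (hDtop : D ≠ ⊤)
    (hlim : limsup (fun h => ENNReal.log (Ent P σ r h) / (Real.log h : EReal))
      (nhdsWithin (0:ℝ) (Set.Ioi 0)) < ((r / 2 : ℝ) : EReal))
    (hE : ∀ᶠ h in nhdsWithin (0:ℝ) (Set.Ioi 0),
      Ent P σ r h ≤ (ENNReal.ofReal h) ^ (r / 2) * D) : False := by
  -- pick a real strictly between the limsup and r/2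
  obtain ⟨z, hz1, hz2⟩ := exists_between hlim
  have hzbot : z ≠ ⊥ := ne_bot_of_gt hz1
  have hztop : z ≠ ⊤ := ne_top_of_lt hz2
  set c : ℝ := z.toReal with hc
  have hzc : z = (c : EReal) := (EReal.coe_toReal hztop hzbot).symm
  rw [hzc] at hz1 hz2
  have hcr : c < r / 2 := by exact_mod_cast hz2
  have hdpos : 0 < r / 2 - c := by linarith
  have hDt : 0 < D.toReal := ENNReal.toReal_pos hD0 hDtop
  set B : ℝ := (|Real.log D.toReal| + 1) / (r / 2 - c) with hB
  have hBeq : (r / 2 - c) * B = |Real.log D.toReal| + 1 := by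
    rw [hB, mul_comm]; exact div_mul_cancel₀ _ hdpos.ne'
  have H1 : ∀ᶠ h in nhdsWithin (0:ℝ) (Set.Ioi 0),
      ENNReal.log (Ent P σ r h) / (Real.log h : EReal) < (c : EReal) :=
    eventually_lt_of_limsup_lt hz1
  have H3 : ∀ᶠ h in nhdsWithin (0:ℝ) (Set.Ioi 0),
      h ∈ Set.Ioo (0:ℝ) (min (Real.exp (-B)) 1) :=
    eventually_of_mem (Ioo_mem_nhdsGT_of_mem
      ⟨le_rfl, lt_min (Real.exp_pos _) one_pos⟩) (fun _ hx => hx)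
  obtain ⟨h, h1, h2, h3⟩ := (H1.and (hE.and H3)).exists
  have hpos : 0 < h := h3.1
  have hlt1 : h < 1 := lt_of_lt_of_le h3.2 (min_le_right _ _)
  have hexp : h < Real.exp (-B) := lt_of_lt_of_le h3.2 (min_le_left _ _)
  have hlogneg : Real.log h < 0 := Real.log_neg hpos hlt1
  have hlogB : Real.log h < -B := by
    have := Real.log_lt_log hpos hexp
    rwa [Real.log_exp] at this
  rcases eq_or_ne (Ent P σ r h) 0 with hE0 | hE0
  · rw [hE0, ENNReal.log_zero, bot_div_neg hlogneg] at h1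
    exact absurd h1 (not_top_lt)
  · have hrp : (ENNReal.ofReal h) ^ (r / 2) ≠ ⊤ :=
      ENNReal.rpow_ne_top_of_nonneg (by linarith) ENNReal.ofReal_ne_top
    have hEtop : Ent P σ r h ≠ ⊤ := by
      intro htop
      rw [htop] at h2
      exact absurd (eq_top_iff.2 h2) (ENNReal.mul_ne_top hrp hDtop)
    have hlogE : ENNReal.log (Ent P σ r h) = ((Real.log (Ent P σ r h).toReal : ℝ) : EReal) := by
      simp [ENNReal.log, hE0, hEtop]
    rw [hlogE, ediv_neg_lt_coe_iff _ hlogneg, EReal.coe_lt_coe_iff] at h1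
    -- upper bound on toReal
    have hub : (Ent P σ r h).toReal ≤ h ^ (r / 2) * D.toReal := by
      have := ENNReal.toReal_mono (ENNReal.mul_ne_top hrp hDtop) h2
      rwa [ENNReal.toReal_mul, ← ENNReal.toReal_rpow, ENNReal.toReal_ofReal hpos.le] at this
    have hEtpos : 0 < (Ent P σ r h).toReal := ENNReal.toReal_pos hE0 hEtop
    have hlog2 : Real.log (Ent P σ r h).toReal ≤ r / 2 * Real.log h + Real.log D.toReal := by
      calc Real.log (Ent P σ r h).toReal ≤ Real.log (h ^ (r / 2) * D.toReal) :=
            Real.log_le_log hEtpos hub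
        _ = r / 2 * Real.log h + Real.log D.toReal := by
            rw [Real.log_mul (Real.rpow_pos_of_pos hpos _).ne' hDt.ne', Real.log_rpow hpos]
    have key : c * Real.log h < r / 2 * Real.log h + Real.log D.toReal :=
      lt_of_lt_of_le h1 hlog2
    have h5 : (r / 2 - c) * B < (r / 2 - c) * (-Real.log h) :=
      mul_lt_mul_of_pos_left (by linarith) hdpos
    have habs : Real.log D.toReal ≤ |Real.log D.toReal| := le_abs_self _
    nlinarith [key, h5, hBeq, habs]

section Main

variable {Ω : Type*} [MeasurableSpace Ω] {P : Measure Ω} {σ : ℝ → Ω → ℝ}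

lemma meas_s (hmeas : Measurable (Function.uncurry σ)) (s : ℝ) : Measurable (σ s) :=
  hmeas.comp measurable_prodMk_left

lemma meas_t (hmeas : Measurable (Function.uncurry σ)) (ω : Ω) :
    Measurable (fun s => σ s ω) :=
  hmeas.comp measurable_prodMk_right

lemma stat_lintegral (hmeas : Measurable (Function.uncurry σ))
    (hstat : ∀ s : ℝ, 0 ≤ s → Measure.map (σ s) P = Measure.map (σ 0) P)
    {f : ℝ → ℝ≥0∞} (hf : Measurable f) {s : ℝ} (hs : 0 ≤ s) :
    ∫⁻ ω, f (σ s ω) ∂P = ∫⁻ ω, f (σ 0 ω) ∂P := by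
  rw [← lintegral_map hf (meas_s hmeas s), hstat s hs, lintegral_map hf (meas_s hmeas 0)]

lemma stat_tail (hmeas : Measurable (Function.uncurry σ))
    (hstat : ∀ s : ℝ, 0 ≤ s → Measure.map (σ s) P = Measure.map (σ 0) P)
    (M : ℝ) {s : ℝ} (hs : 0 ≤ s) :
    P {ω | M < σ s ω} = P {ω | M < σ 0 ω} := by
  have h1 : ∀ t : ℝ, {ω | M < σ t ω} = (σ t) ⁻¹' (Set.Ioi M) := fun t => rfl
  rw [h1, h1, ← Measure.map_apply (meas_s hmeas s) measurableSet_Ioi, hstat s hs,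
    Measure.map_apply (meas_s hmeas 0) measurableSet_Ioi]

lemma fin_swap [SFinite P] (hmeas : Measurable (Function.uncurry σ))
    (hstat : ∀ s : ℝ, 0 ≤ s → Measure.map (σ s) P = Measure.map (σ 0) P)
    {h : ℝ} (hpos : 0 < h) :
    ∫⁻ ω, (∫⁻ s in Set.Ioc (0:ℝ) h, ENNReal.ofReal ((σ s ω)^2)) ∂P
      = ENNReal.ofReal h * ∫⁻ ω, ENNReal.ofReal ((σ 0 ω)^2) ∂P := by
  have hm : AEMeasurable (Function.uncurry fun (ω : Ω) (s : ℝ) => ENNReal.ofReal ((σ s ω)^2))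
      (P.prod (volume.restrict (Set.Ioc (0:ℝ) h))) :=
    (((hmeas.comp measurable_swap).pow_const 2).ennreal_ofReal).aemeasurable
  rw [lintegral_lintegral_swap hm]
  have heq : ∀ s ∈ Set.Ioc (0:ℝ) h,
      (∫⁻ ω, ENNReal.ofReal ((σ s ω)^2) ∂P) = ∫⁻ ω, ENNReal.ofReal ((σ 0 ω)^2) ∂P :=
    fun s hs => stat_lintegral hmeas hstat ((measurable_id.pow_const 2).ennreal_ofReal) hs.1.le
  rw [setLIntegral_congr_fun measurableSet_Ioc heq, setLIntegral_const,
    Real.volume_Ioc, sub_zero, mul_comm]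

lemma aei [SFinite P] (hmeas : Measurable (Function.uncurry σ))
    (hstat : ∀ s : ℝ, 0 ≤ s → Measure.map (σ s) P = Measure.map (σ 0) P)
    (hL2 : ∫⁻ ω, ENNReal.ofReal ((σ 0 ω) ^ 2) ∂P < ⊤)
    {h : ℝ} (hpos : 0 < h) :
    ∀ᵐ ω ∂P, ENNReal.ofReal (JJ σ h ω) = ∫⁻ s in Set.Ioc (0:ℝ) h, ENNReal.ofReal ((σ s ω)^2) := by
  have hfin : ∫⁻ ω, (∫⁻ s in Set.Ioc (0:ℝ) h, ENNReal.ofReal ((σ s ω)^2)) ∂P ≠ ⊤ := by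
    rw [fin_swap hmeas hstat hpos]
    exact (ENNReal.mul_lt_top ENNReal.ofReal_lt_top hL2).ne
  have hmeasint : Measurable fun ω => ∫⁻ s in Set.Ioc (0:ℝ) h, ENNReal.ofReal ((σ s ω)^2) :=
    Measurable.lintegral_prod_right' (((hmeas.comp measurable_swap).pow_const 2).ennreal_ofReal)
  filter_upwards [ae_lt_top hmeasint hfin] with ω hω
  have hint : IntegrableOn (fun s => (σ s ω)^2) (Set.Ioc 0 h) volume := by
    constructor
    · exact (((meas_t hmeas ω).pow_const 2)).aestronglyMeasurable
    · rw [hasFiniteIntegral_iff_ofReal (ae_of_all _ fun s => sq_nonneg _)]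
      exact hω
  simp only [JJ]
  rw [ofReal_integral_eq_lintegral_ofReal hint (ae_of_all _ fun s => sq_nonneg _)]

end Main

lemma JJ_nonneg {Ω : Type*} (σ : ℝ → Ω → ℝ) (h : ℝ) (ω : Ω) : 0 ≤ JJ σ h ω :=
  integral_nonneg fun _ => sq_nonneg _

section Main2

variable {Ω : Type*} [MeasurableSpace Ω] {P : Measure Ω} {σ : ℝ → Ω → ℝ}

lemma le_SS {Ω : Type*} (σ : ℝ → Ω → ℝ) {h : ℝ} (ω : Ω) {t : ℝ}
    (h0 : 0 ≤ t) (h1 : t ≤ h) : ENNReal.ofReal (σ t ω) ≤ SS σ h ω :=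
  le_biSup (fun t => ENNReal.ofReal (σ t ω)) (Set.mem_Icc.mpr ⟨h0, h1⟩)

lemma JJ_meas (hmeas : Measurable (Function.uncurry σ)) (h : ℝ) : Measurable (JJ σ h) :=
  (((hmeas.comp measurable_swap).pow_const 2).stronglyMeasurable.integral_prod_right').measurable

lemma SS_rpow_meas (hsm : Measurable (SS σ (1:ℝ))) (r : ℝ) :
    Measurable (fun ω => SS σ 1 ω ^ r) :=
  ENNReal.continuous_rpow_const.measurable.comp hsm

lemma C2_pos [IsProbabilityMeasure P] (hmeas : Measurable (Function.uncurry σ))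
    (hstat : ∀ s : ℝ, 0 ≤ s → Measure.map (σ s) P = Measure.map (σ 0) P)
    {q0 : ℝ} (hq01 : 1 ≤ q0)
    (hq0lt : limsup (fun h => ENNReal.log (Ent P σ q0 h) / (Real.log h : EReal))
      (nhdsWithin (0:ℝ) (Set.Ioi 0)) < ((q0 / 2 : ℝ) : EReal)) :
    ∫⁻ ω, ENNReal.ofReal ((σ 0 ω)^2) ∂P ≠ 0 := by
  intro hC2
  have hEnt0 : ∀ h : ℝ, 0 < h → Ent P σ q0 h = 0 := by
    intro h hpos
    have hz : ∫⁻ ω, (∫⁻ s in Set.Ioc (0:ℝ) h, ENNReal.ofReal ((σ s ω)^2)) ∂P = 0 := by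
      rw [fin_swap hmeas hstat hpos, hC2, mul_zero]
    have hmeasint : Measurable fun ω => ∫⁻ s in Set.Ioc (0:ℝ) h, ENNReal.ofReal ((σ s ω)^2) :=
      Measurable.lintegral_prod_right' (((hmeas.comp measurable_swap).pow_const 2).ennreal_ofReal)
    have hz' := (lintegral_eq_zero_iff hmeasint).1 hz
    have hJJ : ∀ᵐ ω ∂P, ENNReal.ofReal (JJ σ h ω) = 0 := by
      filter_upwards [hz', aei hmeas hstat (by rw [hC2]; exact ENNReal.zero_lt_top) hpos]
        with ω h1 h2
      rw [h2]; exact h1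
    have : ∀ᵐ ω ∂P, ENNReal.ofReal ((JJ σ h ω) ^ (q0 / 2)) = 0 := by
      filter_upwards [hJJ] with ω hω
      have hj0 : JJ σ h ω = 0 :=
        le_antisymm (by simpa using ENNReal.ofReal_eq_zero.1 hω) (JJ_nonneg σ h ω)
      rw [hj0, Real.zero_rpow (by positivity : q0 / 2 ≠ 0), ENNReal.ofReal_zero]
    rw [Ent, lintegral_congr_ae this, lintegral_zero]
  have htop : ∀ᶠ h in nhdsWithin (0:ℝ) (Set.Ioi 0),
      ENNReal.log (Ent P σ q0 h) / (Real.log h : EReal) = (⊤ : EReal) := by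
    filter_upwards [eventually_of_mem (Ioo_mem_nhdsGT_of_mem
      (⟨le_rfl, zero_lt_one⟩ : (0:ℝ) ∈ Set.Ico 0 1)) (fun _ hx => hx)] with h hh
    rw [hEnt0 h hh.1, ENNReal.log_zero, bot_div_neg (Real.log_neg hh.1 hh.2)]
  rw [limsup_congr htop, limsup_const] at hq0lt
  exact absurd hq0lt not_top_lt

lemma suptop [IsProbabilityMeasure P] (hmeas : Measurable (Function.uncurry σ))
    (hnonneg : ∀ s ω, 0 ≤ σ s ω)
    (hstat : ∀ s : ℝ, 0 ≤ s → Measure.map (σ s) P = Measure.map (σ 0) P)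
    (hL2 : ∫⁻ ω, ENNReal.ofReal ((σ 0 ω) ^ 2) ∂P < ⊤)
    (hsm : Measurable (SS σ (1:ℝ)))
    {r : ℝ} (hr1 : 1 ≤ r)
    (hlim : limsup (fun h => ENNReal.log (Ent P σ r h) / (Real.log h : EReal))
      (nhdsWithin (0:ℝ) (Set.Ioi 0)) < ((r / 2 : ℝ) : EReal)) :
    ∫⁻ ω, SS σ 1 ω ^ r ∂P = ⊤ := by
  by_contra hC
  set C := ∫⁻ ω, SS σ 1 ω ^ r ∂P with hCdef
  have hC2 := C2_pos hmeas hstat hr1 hlim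
  have hC0 : C ≠ 0 := by
    intro h0
    apply hC2
    have hSS : ∀ᵐ ω ∂P, SS σ 1 ω ^ r = 0 :=
      (lintegral_eq_zero_iff (SS_rpow_meas hsm r)).1 h0
    have : ∀ᵐ ω ∂P, ENNReal.ofReal ((σ 0 ω)^2) = 0 := by
      filter_upwards [hSS] with ω hω
      have hS0 : SS σ 1 ω = 0 := by
        rcases ENNReal.rpow_eq_zero_iff.mp hω with h | h
        · exact h.1
        · linarith [h.2]
      have hσ0 : ENNReal.ofReal (σ 0 ω) = 0 := by
        refine le_antisymm ?_ (zero_le)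
        rw [← hS0]
        exact le_SS σ ω le_rfl zero_le_one
      have : σ 0 ω = 0 := le_antisymm (by simpa using ENNReal.ofReal_eq_zero.1 hσ0)
        (hnonneg 0 ω)
      rw [this]; simp
    rw [lintegral_congr_ae this, lintegral_zero]
  have hEb : ∀ᶠ h in nhdsWithin (0:ℝ) (Set.Ioi 0),
      Ent P σ r h ≤ (ENNReal.ofReal h) ^ (r / 2) * C := by
    filter_upwards [eventually_of_mem (Ioo_mem_nhdsGT_of_mem
      (⟨le_rfl, zero_lt_one⟩ : (0:ℝ) ∈ Set.Ico 0 1)) (fun _ hx => hx)] with h hh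
    have hpos : 0 < h := hh.1
    have hb : ∀ᵐ ω ∂P, ENNReal.ofReal ((JJ σ h ω) ^ (r / 2))
        ≤ SS σ 1 ω ^ r * (ENNReal.ofReal h) ^ (r / 2) := by
      filter_upwards [aei hmeas hstat hL2 hpos] with ω hω
      have step1 : ∫⁻ s in Set.Ioc (0:ℝ) h, ENNReal.ofReal ((σ s ω)^2)
          ≤ (SS σ 1 ω)^2 * ENNReal.ofReal h := by
        have hptwise : ∀ s ∈ Set.Ioc (0:ℝ) h, ENNReal.ofReal ((σ s ω)^2) ≤ (SS σ 1 ω)^2 := by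
          intro s hs
          rw [ENNReal.ofReal_pow (hnonneg s ω)]
          exact pow_le_pow_left' (le_SS σ ω hs.1.le (hs.2.trans hh.2.le)) 2
        calc ∫⁻ s in Set.Ioc (0:ℝ) h, ENNReal.ofReal ((σ s ω)^2)
            ≤ ∫⁻ _ in Set.Ioc (0:ℝ) h, (SS σ 1 ω)^2 :=
              setLIntegral_mono' measurableSet_Ioc hptwise
          _ = (SS σ 1 ω)^2 * ENNReal.ofReal h := by
              rw [setLIntegral_const, Real.volume_Ioc, sub_zero]
      calc ENNReal.ofReal ((JJ σ h ω) ^ (r / 2))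
          = (ENNReal.ofReal (JJ σ h ω)) ^ (r / 2) :=
            (ENNReal.ofReal_rpow_of_nonneg (JJ_nonneg σ h ω) (by linarith)).symm
        _ ≤ ((SS σ 1 ω)^2 * ENNReal.ofReal h) ^ (r / 2) := by
            rw [hω]; exact ENNReal.rpow_le_rpow step1 (by linarith)
        _ = ((SS σ 1 ω)^2) ^ (r / 2) * (ENNReal.ofReal h) ^ (r / 2) :=
            ENNReal.mul_rpow_of_nonneg _ _ (by linarith)
        _ = SS σ 1 ω ^ r * (ENNReal.ofReal h) ^ (r / 2) := by
            rw [← ENNReal.rpow_natCast (SS σ 1 ω) 2, ← ENNReal.rpow_mul]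
            rw [show ((2:ℕ):ℝ) * (r / 2) = r by push_cast; ring]
    calc Ent P σ r h ≤ ∫⁻ ω, SS σ 1 ω ^ r * (ENNReal.ofReal h) ^ (r / 2) ∂P :=
          lintegral_mono_ae hb
      _ = C * (ENNReal.ofReal h) ^ (r / 2) := lintegral_mul_const _ (SS_rpow_meas hsm r)
      _ = (ENNReal.ofReal h) ^ (r / 2) * C := mul_comm _ _
  exact core P σ r (by linarith) C hC0 hC hlim hEb

lemma mom_le [IsProbabilityMeasure P] (hnonneg : ∀ s ω, 0 ≤ σ s ω)
    {a b : ℝ} (ha : 0 ≤ a) (hab : a ≤ b) :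
    Mom P σ a ≤ 1 + Mom P σ b := by
  simp only [Mom]
  have h1 : (1 : ℝ≥0∞) + ∫⁻ ω, ENNReal.ofReal ((σ 0 ω) ^ b) ∂P
      = ∫⁻ ω, (1 + ENNReal.ofReal ((σ 0 ω) ^ b)) ∂P := by
    rw [lintegral_add_left measurable_const, lintegral_one, measure_univ]
  rw [h1]
  refine lintegral_mono fun ω => ?_
  rcases le_or_gt (σ 0 ω) 1 with hx | hx
  · calc ENNReal.ofReal ((σ 0 ω) ^ a) ≤ 1 := by
          rw [show (1:ℝ≥0∞) = ENNReal.ofReal 1 by simp]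
          exact ENNReal.ofReal_le_ofReal (Real.rpow_le_one (hnonneg 0 ω) hx ha)
      _ ≤ 1 + ENNReal.ofReal ((σ 0 ω) ^ b) := le_self_add
  · calc ENNReal.ofReal ((σ 0 ω) ^ a) ≤ ENNReal.ofReal ((σ 0 ω) ^ b) :=
          ENNReal.ofReal_le_ofReal (Real.rpow_le_rpow_of_exponent_le hx.le hab)
      _ ≤ 1 + ENNReal.ofReal ((σ 0 ω) ^ b) := le_add_self

end Main2

section Main3

variable {Ω : Type*} [MeasurableSpace Ω] {P : Measure Ω} {σ : ℝ → Ω → ℝ}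

lemma tail_big [IsProbabilityMeasure P] (hmeas : Measurable (Function.uncurry σ))
    (hnonneg : ∀ s ω, 0 ≤ σ s ω)
    {rr : ℝ} (hrr2 : 2 ≤ rr) {e : ℝ} (he : 0 < e)
    (hmom : Mom P σ rr = ⊤) (M0 : ℝ) (hM0 : 1 ≤ M0) :
    ∃ M, M0 ≤ M ∧ (ENNReal.ofReal M) ^ (-(rr + e)) ≤ P {ω | M < σ 0 ω} := by
  by_contra hcon
  push_neg at hcon
  have hlc : Mom P σ rr = ENNReal.ofReal rr *
      ∫⁻ t in Set.Ioi (0:ℝ), P {a | t < σ 0 a} * ENNReal.ofReal (t ^ (rr - 1)) :=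
    lintegral_rpow_eq_lintegral_meas_lt_mul P (ae_of_all _ fun ω => hnonneg 0 ω)
      (meas_s hmeas 0).aemeasurable (by linarith)
  have hsplit : Set.Ioc (0:ℝ) M0 ∪ Set.Ioi M0 = Set.Ioi 0 :=
    Set.Ioc_union_Ioi_eq_Ioi (by linarith)
  have hB1 : ∫⁻ t in Set.Ioc (0:ℝ) M0, P {a | t < σ 0 a} * ENNReal.ofReal (t ^ (rr - 1))
      < ⊤ := by
    have hb : ∀ t ∈ Set.Ioc (0:ℝ) M0,
        P {a | t < σ 0 a} * ENNReal.ofReal (t ^ (rr - 1))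
          ≤ ENNReal.ofReal (M0 ^ (rr - 1)) := by
      intro t ht
      calc P {a | t < σ 0 a} * ENNReal.ofReal (t ^ (rr - 1))
          ≤ 1 * ENNReal.ofReal (M0 ^ (rr - 1)) :=
            mul_le_mul' prob_le_one
              (ENNReal.ofReal_le_ofReal (Real.rpow_le_rpow ht.1.le ht.2 (by linarith)))
        _ = ENNReal.ofReal (M0 ^ (rr - 1)) := one_mul _
    calc ∫⁻ t in Set.Ioc (0:ℝ) M0, P {a | t < σ 0 a} * ENNReal.ofReal (t ^ (rr - 1))
        ≤ ∫⁻ _ in Set.Ioc (0:ℝ) M0, ENNReal.ofReal (M0 ^ (rr - 1)) :=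
          setLIntegral_mono' measurableSet_Ioc hb
      _ = ENNReal.ofReal (M0 ^ (rr - 1)) * ENNReal.ofReal M0 := by
          rw [setLIntegral_const, Real.volume_Ioc, sub_zero]
      _ < ⊤ := ENNReal.mul_lt_top ENNReal.ofReal_lt_top ENNReal.ofReal_lt_top
  have hB2 : ∫⁻ t in Set.Ioi M0, P {a | t < σ 0 a} * ENNReal.ofReal (t ^ (rr - 1))
      < ⊤ := by
    have hb : ∀ t ∈ Set.Ioi M0,
        P {a | t < σ 0 a} * ENNReal.ofReal (t ^ (rr - 1))
          ≤ ENNReal.ofReal (t ^ (-1 - e)) := by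
      intro t ht
      have htpos : (0:ℝ) < t := lt_of_lt_of_le one_pos (le_trans hM0 (le_of_lt ht))
      calc P {a | t < σ 0 a} * ENNReal.ofReal (t ^ (rr - 1))
          ≤ (ENNReal.ofReal t) ^ (-(rr + e)) * ENNReal.ofReal (t ^ (rr - 1)) :=
            mul_le_mul_left (hcon t (le_of_lt ht)).le _
        _ = ENNReal.ofReal (t ^ (-(rr + e))) * ENNReal.ofReal (t ^ (rr - 1)) := by
            rw [ENNReal.ofReal_rpow_of_pos htpos]
        _ = ENNReal.ofReal (t ^ (-(rr + e)) * t ^ (rr - 1)) :=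
            (ENNReal.ofReal_mul (Real.rpow_nonneg htpos.le _)).symm
        _ = ENNReal.ofReal (t ^ (-1 - e)) := by
            rw [← Real.rpow_add htpos, show -(rr + e) + (rr - 1) = -1 - e by ring]
    have hint : IntegrableOn (fun t : ℝ => t ^ (-1 - e)) (Set.Ioi M0) volume :=
      integrableOn_Ioi_rpow_of_lt (by linarith) (by linarith)
    have hfin2 : ∫⁻ t in Set.Ioi M0, ENNReal.ofReal (t ^ (-1 - e)) < ⊤ := by
      have hnn : 0 ≤ᵐ[volume.restrict (Set.Ioi M0)] fun t : ℝ => t ^ (-1 - e) := by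
        refine (ae_restrict_iff' measurableSet_Ioi).2 (ae_of_all _ fun t ht => ?_)
        have : (0:ℝ) < t := lt_of_lt_of_le one_pos (le_trans hM0 (le_of_lt ht))
        exact Real.rpow_nonneg this.le _
      exact (hasFiniteIntegral_iff_ofReal hnn).1 hint.hasFiniteIntegral
    exact lt_of_le_of_lt (setLIntegral_mono' measurableSet_Ioi hb) hfin2
  have : Mom P σ rr < ⊤ := by
    rw [hlc]
    refine ENNReal.mul_lt_top ENNReal.ofReal_lt_top ?_
    rw [← hsplit, lintegral_union measurableSet_Ioi (Set.Ioc_disjoint_Ioi le_rfl)]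
    exact ENNReal.add_lt_top.2 ⟨hB1, hB2⟩
  rw [hmom] at this
  exact absurd this (lt_irrefl ⊤)

end Main3

lemma rpow_ne_zero' {x : ℝ≥0∞} (h0 : x ≠ 0) (ht : x ≠ ⊤) (y : ℝ) : x ^ y ≠ 0 := fun h => by
  rcases ENNReal.rpow_eq_zero_iff.mp h with h | h
  exacts [h0 h.1, ht h.1]

lemma rpow_ne_top' {x : ℝ≥0∞} (h0 : x ≠ 0) (ht : x ≠ ⊤) (y : ℝ) : x ^ y ≠ ⊤ := fun h => by
  rcases ENNReal.rpow_eq_top_iff.mp h with h | h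
  exacts [h0 h.1, ht h.1]

section Main4

variable {Ω : Type*} [MeasurableSpace Ω] {P : Measure Ω} {σ : ℝ → Ω → ℝ}

lemma caseB [IsProbabilityMeasure P] (hmeas : Measurable (Function.uncurry σ))
    (hnonneg : ∀ s ω, 0 ≤ σ s ω)
    (hstat : ∀ s : ℝ, 0 ≤ s → Measure.map (σ s) P = Measure.map (σ 0) P)
    (hL2 : ∫⁻ ω, ENNReal.ofReal ((σ 0 ω) ^ 2) ∂P < ⊤)
    {q : ℝ} (hq2 : 2 < q) {h0 : ℝ} (hh0 : 0 < h0)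
    (hsm : Measurable (SS σ h0))
    (hK0 : Ent P σ q h0 ≠ 0) (hKtop : Ent P σ q h0 ≠ ⊤)
    {pp u γ : ℝ} (hpp : 0 ≤ pp) (hu : 0 < u) (hγ : 0 < γ)
    (hrel : pp + (2 - u) * (q / (q - 2)) = γ)
    (htail : ∀ M0 : ℝ, 1 ≤ M0 → ∃ M, M0 ≤ M ∧
      (ENNReal.ofReal M) ^ (-u) ≤ P {ω | M < σ 0 ω}) :
    ∫⁻ ω, SS σ h0 ω ^ pp ∂P = ⊤ := by
  by_contra hfin
  set V := ∫⁻ ω, SS σ h0 ω ^ pp ∂P with hV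
  have hVtop : V ≠ ⊤ := hfin
  set K := Ent P σ q h0 with hKdef
  have hq20 : (0:ℝ) < q - 2 := by linarith
  have hqpos : (0:ℝ) < q := by linarith
  set β : ℝ := q / (q - 2) with hβ
  have hβpos : 0 < β := by positivity
  have hKq0 : K ^ (2/q) ≠ 0 := rpow_ne_zero' hK0 hKtop _
  have hKqtop : K ^ (2/q) ≠ ⊤ := rpow_ne_top' hK0 hKtop _
  set c3 : ℝ≥0∞ := (ENNReal.ofReal h0) ^ β * ((K ^ (2/q))⁻¹) ^ β with hc3
  have hh00 : ENNReal.ofReal h0 ≠ 0 := (ENNReal.ofReal_pos.2 hh0).ne'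
  have hc30 : c3 ≠ 0 :=
    mul_ne_zero (rpow_ne_zero' hh00 ENNReal.ofReal_ne_top _)
      (rpow_ne_zero' (ENNReal.inv_ne_zero.2 hKqtop) (ENNReal.inv_ne_top.2 hKq0) _)
  have hc3top : c3 ≠ ⊤ :=
    ENNReal.mul_ne_top (rpow_ne_top' hh00 ENNReal.ofReal_ne_top _)
      (rpow_ne_top' (ENNReal.inv_ne_zero.2 hKqtop) (ENNReal.inv_ne_top.2 hKq0) _)
  have main : ∀ M : ℝ, 1 ≤ M →
      (ENNReal.ofReal M) ^ (-u) ≤ P {ω | M < σ 0 ω} →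
      (ENNReal.ofReal M) ^ γ * c3 ≤ V := by
    intro M hM1 hτ
    set eM : ℝ≥0∞ := ENNReal.ofReal M with heM
    have heM1 : (1:ℝ≥0∞) ≤ eM := by rw [heM]; exact ENNReal.one_le_ofReal.2 hM1
    have heM0 : eM ≠ 0 := fun h => by rw [h] at heM1; simp at heM1
    have heMtop : eM ≠ ⊤ := ENNReal.ofReal_ne_top
    set ν := volume.restrict (Set.Ioc (0:ℝ) h0) with hν
    set lam : Ω → ℝ≥0∞ := fun ω => ν {s | M < σ s ω} with hlam
    have hset : MeasurableSet {p : Ω × ℝ | M < σ p.2 p.1} :=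
      measurableSet_lt measurable_const (hmeas.comp measurable_swap)
    have hlmeas : Measurable lam := measurable_measure_prodMk_left hset
    have hlpowmeas : Measurable fun ω => lam ω ^ (q/2) :=
      ENNReal.continuous_rpow_const.measurable.comp hlmeas
    -- (f1) expectation of lam
    have hlint : ∫⁻ ω, lam ω ∂P = ENNReal.ofReal h0 * P {ω | M < σ 0 ω} := by
      have h1 : ∫⁻ ω, lam ω ∂P = (P.prod ν) {p : Ω × ℝ | M < σ p.2 p.1} :=
        (Measure.prod_apply hset).symm
      rw [h1, Measure.prod_apply_symm hset]
      have h2 : ∀ s ∈ Set.Ioc (0:ℝ) h0,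
          P ((fun ω => (ω, s)) ⁻¹' {p : Ω × ℝ | M < σ p.2 p.1}) = P {ω | M < σ 0 ω} :=
        fun s hs => stat_tail hmeas hstat M hs.1.le
      rw [hν, setLIntegral_congr_fun measurableSet_Ioc h2, setLIntegral_const,
        Real.volume_Ioc, sub_zero, mul_comm]
    -- (f2)
    have hKge : eM ^ q * ∫⁻ ω, lam ω ^ (q/2) ∂P ≤ K := by
      rw [← lintegral_const_mul _ hlpowmeas, hKdef]
      simp only [Ent]
      refine lintegral_mono_ae ?_
      filter_upwards [aei hmeas hstat hL2 hh0] with ω hω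
      have hBmeas : MeasurableSet {s : ℝ | M < σ s ω} :=
        measurableSet_lt measurable_const (meas_t hmeas ω)
      have h1 : eM ^ (2:ℝ) * lam ω ≤ ENNReal.ofReal (JJ σ h0 ω) := by
        rw [hω]
        have h2 : ∀ s ∈ {s : ℝ | M < σ s ω}, eM ^ (2:ℝ) ≤ ENNReal.ofReal ((σ s ω)^2) := by
          intro s hs
          rw [ENNReal.ofReal_pow (hnonneg s ω), heM,
            show (2:ℝ) = ((2:ℕ):ℝ) by norm_num, ENNReal.rpow_natCast]
          exact pow_le_pow_left' (ENNReal.ofReal_le_ofReal (le_of_lt hs)) 2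
        calc eM ^ (2:ℝ) * lam ω
            = ∫⁻ _ in {s : ℝ | M < σ s ω}, eM ^ (2:ℝ) ∂ν := by rw [setLIntegral_const]
          _ ≤ ∫⁻ s in {s : ℝ | M < σ s ω}, ENNReal.ofReal ((σ s ω)^2) ∂ν :=
              setLIntegral_mono' hBmeas h2
          _ ≤ ∫⁻ s, ENNReal.ofReal ((σ s ω)^2) ∂ν := setLIntegral_le_lintegral _ _
      have h3 := ENNReal.rpow_le_rpow h1 (by positivity : (0:ℝ) ≤ q/2)
      rwa [ENNReal.mul_rpow_of_nonneg _ _ (by positivity : (0:ℝ) ≤ q/2), ← ENNReal.rpow_mul,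
        show (2:ℝ) * (q/2) = q by ring,
        ENNReal.ofReal_rpow_of_nonneg (JJ_nonneg σ h0 ω) (by positivity : (0:ℝ) ≤ q/2)] at h3
    -- (f3) Hölder
    have hconj : Real.HolderConjugate (q/2) β := by
      refine Real.holderConjugate_iff.mpr ⟨?_, ?_⟩
      · linarith
      · rw [hβ]
        field_simp
        ring
    set Aset : Set Ω := {ω | lam ω ≠ 0} with hAset
    have hAmeas : MeasurableSet Aset := (hlmeas (measurableSet_singleton 0)).compl
    set g : Ω → ℝ≥0∞ := Aset.indicator (fun _ => 1) with hg
    have hgmeas : Measurable g := measurable_const.indicator hAmeas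
    have hmulg : lam * g = lam := by
      funext ω
      by_cases hω : lam ω = 0
      · simp [Pi.mul_apply, hg, hω]
      · have hmem : ω ∈ Aset := hω
        simp [Pi.mul_apply, hg, Set.indicator_of_mem hmem]
    have hH := ENNReal.lintegral_mul_le_Lp_mul_Lq P hconj hlmeas.aemeasurable hgmeas.aemeasurable
    rw [hmulg] at hH
    have hgint : ∫⁻ ω, g ω ^ β ∂P = P Aset := by
      have h1 : ∫⁻ ω, g ω ^ β ∂P = ∫⁻ ω, g ω ∂P := by
        refine lintegral_congr fun ω => ?_
        by_cases hω : ω ∈ Aset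
        · simp [hg, Set.indicator_of_mem hω]
        · simp [hg, Set.indicator_of_notMem hω, ENNReal.zero_rpow_of_pos hβpos]
      rw [h1, hg]
      exact lintegral_indicator_one hAmeas
    rw [hgint, show (1:ℝ)/(q/2) = 2/q from one_div_div q 2,
      show (1:ℝ)/β = (q-2)/q by rw [hβ, one_div_div]] at hH
    -- (f4)
    set X : ℝ≥0∞ := P {ω | eM ≤ SS σ h0 ω} with hX
    have hAX : P Aset ≤ X := by
      refine measure_mono fun ω hω => ?_
      simp only [Set.mem_setOf_eq]
      by_contra hnot
      have hSlt : SS σ h0 ω < eM := lt_of_not_ge hnot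
      refine hω ?_
      have hempty : {s : ℝ | M < σ s ω} ∩ Set.Ioc 0 h0 = ∅ := by
        ext s
        simp only [Set.mem_inter_iff, Set.mem_setOf_eq, Set.mem_empty_iff_false, iff_false,
          not_and]
        intro hs1 hs2
        have h5 : ENNReal.ofReal (σ s ω) ≤ SS σ h0 ω := le_SS σ ω hs2.1.le hs2.2
        have h6 : eM ≤ ENNReal.ofReal (σ s ω) := by
          rw [heM]; exact ENNReal.ofReal_le_ofReal hs1.le
        exact absurd (le_trans h6 h5) (not_le.2 hSlt)
      show ν {s : ℝ | M < σ s ω} = 0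
      rw [hν, Measure.restrict_apply (measurableSet_lt measurable_const (meas_t hmeas ω)),
        hempty, measure_empty]
    -- chain algebra
    have hstep_b : ∫⁻ ω, lam ω ^ (q/2) ∂P ≤ (eM ^ q)⁻¹ * K := by
      have h7 := mul_le_mul_right hKge ((eM ^ q)⁻¹)
      rwa [← mul_assoc, ENNReal.inv_mul_cancel (rpow_ne_zero' heM0 heMtop q)
        (rpow_ne_top' heM0 heMtop q), one_mul] at h7
    have hc1 : ((eM ^ q)⁻¹ * K) ^ (2/q) = eM ^ (-(2:ℝ)) * K ^ (2/q) := by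
      rw [ENNReal.mul_rpow_of_nonneg _ _ (by positivity : (0:ℝ) ≤ 2/q), ENNReal.inv_rpow,
        ← ENNReal.rpow_mul, show q * (2/q) = 2 by field_simp, ← ENNReal.rpow_neg]
    have hstep_c : (∫⁻ ω, lam ω ^ (q/2) ∂P) ^ ((2:ℝ)/q) ≤ eM ^ (-(2:ℝ)) * K ^ (2/q) := by
      calc (∫⁻ ω, lam ω ^ (q/2) ∂P) ^ ((2:ℝ)/q)
          ≤ ((eM ^ q)⁻¹ * K) ^ ((2:ℝ)/q) :=
            ENNReal.rpow_le_rpow hstep_b (by positivity)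
        _ = eM ^ (-(2:ℝ)) * K ^ (2/q) := hc1
    have hcomb : ENNReal.ofReal h0 * eM ^ (-u)
        ≤ (eM ^ (-(2:ℝ)) * K ^ (2/q)) * X ^ ((q-2)/q) := by
      calc ENNReal.ofReal h0 * eM ^ (-u)
          ≤ ENNReal.ofReal h0 * P {ω | M < σ 0 ω} := mul_le_mul_right hτ _
        _ = ∫⁻ ω, lam ω ∂P := hlint.symm
        _ ≤ (∫⁻ ω, lam ω ^ (q/2) ∂P) ^ ((2:ℝ)/q) * (P Aset) ^ ((q-2)/q) := hH
        _ ≤ (eM ^ (-(2:ℝ)) * K ^ (2/q)) * X ^ ((q-2)/q) :=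
            mul_le_mul' hstep_c (ENNReal.rpow_le_rpow hAX (by positivity))
    set D2 : ℝ≥0∞ := eM ^ (-(2:ℝ)) * K ^ (2/q) with hD2
    have hD20 : D2 ≠ 0 := mul_ne_zero (rpow_ne_zero' heM0 heMtop _) hKq0
    have hD2top : D2 ≠ ⊤ := ENNReal.mul_ne_top (rpow_ne_top' heM0 heMtop _) hKqtop
    have hXlow : (D2⁻¹ * (ENNReal.ofReal h0 * eM ^ (-u))) ^ β ≤ X := by
      have h9 : D2⁻¹ * (ENNReal.ofReal h0 * eM ^ (-u)) ≤ X ^ ((q-2)/q) := by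
        calc D2⁻¹ * (ENNReal.ofReal h0 * eM ^ (-u))
            ≤ D2⁻¹ * (D2 * X ^ ((q-2)/q)) := mul_le_mul_right hcomb _
          _ = X ^ ((q-2)/q) := by
              rw [← mul_assoc, ENNReal.inv_mul_cancel hD20 hD2top, one_mul]
      have h10 := ENNReal.rpow_le_rpow h9 hβpos.le
      rwa [← ENNReal.rpow_mul, show (q-2)/q * β = 1 by rw [hβ]; field_simp, ENNReal.rpow_one]
        at h10
    have hmarkov : eM ^ pp * X ≤ V := by
      have hsub : {ω | eM ≤ SS σ h0 ω} ⊆ {ω | eM ^ pp ≤ SS σ h0 ω ^ pp} :=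
        fun ω hω => ENNReal.rpow_le_rpow hω hpp
      calc eM ^ pp * X ≤ eM ^ pp * P {ω | eM ^ pp ≤ SS σ h0 ω ^ pp} :=
            mul_le_mul_right (measure_mono hsub) _
        _ ≤ V := mul_meas_ge_le_lintegral₀
            (ENNReal.continuous_rpow_const.measurable.comp hsm).aemeasurable _
    -- expansion
    have e1 : (D2⁻¹ * (ENNReal.ofReal h0 * eM ^ (-u))) ^ β
        = eM ^ (2*β) * ((K ^ (2/q))⁻¹) ^ β * ((ENNReal.ofReal h0) ^ β * eM ^ (-u*β)) := by
      rw [hD2, ENNReal.mul_inv (Or.inl (rpow_ne_zero' heM0 heMtop _))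
        (Or.inl (rpow_ne_top' heM0 heMtop _)), ENNReal.rpow_neg, inv_inv,
        ENNReal.mul_rpow_of_nonneg _ _ hβpos.le, ENNReal.mul_rpow_of_nonneg _ _ hβpos.le,
        ENNReal.mul_rpow_of_nonneg _ _ hβpos.le, ← ENNReal.rpow_mul, ← ENNReal.rpow_mul]
    have e2 : eM ^ pp * (eM ^ (2*β) * ((K ^ (2/q))⁻¹) ^ β
        * ((ENNReal.ofReal h0) ^ β * eM ^ (-u*β))) = eM ^ γ * c3 := by
      rw [hc3, show γ = pp + (2*β + -u*β) by rw [← hrel]; ring,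
        ENNReal.rpow_add _ _ heM0 heMtop, ENNReal.rpow_add _ _ heM0 heMtop]
      ring
    calc eM ^ γ * c3 = eM ^ pp * ((D2⁻¹ * (ENNReal.ofReal h0 * eM ^ (-u))) ^ β) := by
          rw [e1, e2]
      _ ≤ eM ^ pp * X := mul_le_mul_right hXlow _
      _ ≤ V := hmarkov
  -- conclude
  set W := V * c3⁻¹ with hW
  have hWtop : W ≠ ⊤ := ENNReal.mul_ne_top hVtop (ENNReal.inv_ne_top.2 hc30)
  obtain ⟨M, hMge, hMτ⟩ := htail (max 1 ((W.toReal + 1) ^ (1/γ))) (le_max_left _ _)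
  have hM1 : 1 ≤ M := le_trans (le_max_left _ _) hMge
  have hmain := main M hM1 hMτ
  have h11 : (ENNReal.ofReal M) ^ γ ≤ W := by
    rw [hW]
    have h12 := mul_le_mul_left hmain c3⁻¹
    rwa [mul_assoc, ENNReal.mul_inv_cancel hc30 hc3top, mul_one] at h12
  have h12 : M ^ γ ≤ W.toReal := by
    rw [ENNReal.ofReal_rpow_of_pos (by linarith : (0:ℝ) < M)] at h11
    exact (ENNReal.ofReal_le_iff_le_toReal hWtop).1 h11
  have h13 : W.toReal + 1 ≤ M ^ γ := by
    have h14 : ((W.toReal + 1) ^ ((1:ℝ)/γ)) ≤ M := le_trans (le_max_right _ _) hMge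
    have h15 : (0:ℝ) ≤ W.toReal + 1 := by positivity
    calc W.toReal + 1 = ((W.toReal + 1) ^ ((1:ℝ)/γ)) ^ γ := by
          rw [← Real.rpow_mul h15, one_div_mul_cancel hγ.ne', Real.rpow_one]
      _ ≤ M ^ γ := Real.rpow_le_rpow (Real.rpow_nonneg h15 _) h14 hγ.le
  linarith

end Main4

end Stmt4Aux

open Stmt4Aux

/-- Corollary 2 (cor:diff2): a necessary condition for multi-scaling is the existence of
`h > 0` and `p ≥ 2` such that `E[σ₀^p] < ∞` but `E[(sup_{0 ≤ t ≤ h} σ_t)^p] = ∞`.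
The running supremum is expressed in `ℝ≥0∞` to allow infinite values. -/
theorem stmt_4 {Ω : Type*} [MeasurableSpace Ω] (P : Measure Ω) [IsProbabilityMeasure P]
    (σ : ℝ → Ω → ℝ)
    (hmeas : Measurable (Function.uncurry σ))
    (hnonneg : ∀ s ω, 0 ≤ σ s ω)
    (hstat : ∀ s : ℝ, 0 ≤ s → Measure.map (σ s) P = Measure.map (σ 0) P)
    (hL2 : ∫⁻ ω, ENNReal.ofReal ((σ 0 ω) ^ 2) ∂P < ⊤)
    (hcont : ∀ ε : ℝ, 0 < ε →
      Tendsto (fun h => P {ω | ε ≤ (1 / h) * ∫ s in Set.Ioc (0:ℝ) h, (σ s ω - σ 0 ω) ^ 2})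
        (nhdsWithin 0 (Set.Ioi 0)) (nhds 0))
    (hsupmeas : ∀ h : ℝ, 0 < h →
      Measurable (fun ω => ⨆ t ∈ Set.Icc (0:ℝ) h, ENNReal.ofReal (σ t ω)))
    (A : ℝ → EReal)
    (hA : ∀ q : ℝ, A q = limsup
      (fun h => ENNReal.log
          (∫⁻ ω, ENNReal.ofReal ((∫ s in Set.Ioc (0:ℝ) h, (σ s ω) ^ 2) ^ (q / 2)) ∂P)
        / (Real.log h : EReal))
      (nhdsWithin 0 (Set.Ioi 0)))
    (hms : (interior {q : ℝ | 1 ≤ q ∧ ⊥ < A q ∧ A q < ((q / 2 : ℝ) : EReal)}).Nonempty) :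
    ∃ h : ℝ, 0 < h ∧ ∃ p : ℝ, 2 ≤ p ∧
      ∫⁻ ω, ENNReal.ofReal ((σ 0 ω) ^ p) ∂P < ⊤ ∧
      ∫⁻ ω, (⨆ t ∈ Set.Icc (0:ℝ) h, ENNReal.ofReal (σ t ω)) ^ p ∂P = ⊤ := by
  classical
  have hA' : ∀ q : ℝ, A q = limsup
      (fun h => ENNReal.log (Ent P σ q h) / (Real.log h : EReal))
      (nhdsWithin (0:ℝ) (Set.Ioi 0)) := hA
  obtain ⟨q0, hq0i⟩ := hms
  obtain ⟨hq01, hq0bot, hq0lt⟩ := interior_subset hq0i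
  have hq0lim : limsup (fun h => ENNReal.log (Ent P σ q0 h) / (Real.log h : EReal))
      (nhdsWithin (0:ℝ) (Set.Ioi 0)) < ((q0 / 2 : ℝ) : EReal) := by
    rw [← hA' q0]; exact hq0lt
  have hC2pos : ∫⁻ ω, ENNReal.ofReal ((σ 0 ω)^2) ∂P ≠ 0 := C2_pos hmeas hstat hq01 hq0lim
  have hmom2 : Mom P σ 2 = ∫⁻ ω, ENNReal.ofReal ((σ 0 ω)^2) ∂P := by
    simp only [Mom]
    refine lintegral_congr fun ω => ?_
    rw [show (2:ℝ) = ((2:ℕ):ℝ) by norm_num, Real.rpow_natCast]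
  by_cases hq0fin : Mom P σ q0 < ⊤
  · -- CASE A : the moment of order q0 is finite
    have hsm1 : Measurable (SS σ (1:ℝ)) := hsupmeas 1 one_pos
    have hsup : ∫⁻ ω, SS σ 1 ω ^ q0 ∂P = ⊤ :=
      suptop hmeas hnonneg hstat hL2 hsm1 hq01 hq0lim
    rcases le_or_gt 2 q0 with h2q | hq2
    · exact ⟨1, one_pos, q0, h2q, hq0fin, hsup⟩
    · refine ⟨1, one_pos, 2, le_refl 2, ?_, ?_⟩
      · show Mom P σ 2 < ⊤
        rw [hmom2]; exact hL2
      · show ∫⁻ ω, SS σ 1 ω ^ (2:ℝ) ∂P = ⊤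
        by_contra hfin2
        have hb : ∀ ω, SS σ 1 ω ^ q0 ≤ 1 + SS σ 1 ω ^ (2:ℝ) := by
          intro ω
          rcases le_or_gt (SS σ 1 ω) 1 with hx | hx
          · calc SS σ 1 ω ^ q0 ≤ 1 ^ q0 := ENNReal.rpow_le_rpow hx (by linarith)
              _ = 1 := ENNReal.one_rpow _
              _ ≤ 1 + SS σ 1 ω ^ (2:ℝ) := le_self_add
          · calc SS σ 1 ω ^ q0 ≤ SS σ 1 ω ^ (2:ℝ) :=
                ENNReal.rpow_le_rpow_of_exponent_le hx.le (by linarith)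
              _ ≤ 1 + SS σ 1 ω ^ (2:ℝ) := le_add_self
        have h6 : (⊤:ℝ≥0∞) ≤ ∫⁻ ω, (1 + SS σ 1 ω ^ (2:ℝ)) ∂P := hsup ▸ lintegral_mono hb
        rw [lintegral_add_left measurable_const, lintegral_one, measure_univ] at h6
        have h7 : (1:ℝ≥0∞) + ∫⁻ ω, SS σ 1 ω ^ (2:ℝ) ∂P < ⊤ :=
          ENNReal.add_lt_top.2 ⟨ENNReal.one_lt_top, lt_top_iff_ne_top.2 hfin2⟩
        exact absurd (lt_of_le_of_lt h6 h7) (lt_irrefl ⊤)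
  · -- CASE B : the moment of order q0 is infinite
    have hq0top : Mom P σ q0 = ⊤ := top_le_iff.1 (not_lt.1 hq0fin)
    have hq02 : 2 ≤ q0 := by
      by_contra hlt
      push_neg at hlt
      have h9 := mom_le (P:=P) (σ:=σ) hnonneg (a:=q0) (b:=2) (by linarith) hlt.le
      rw [hq0top, hmom2] at h9
      have h8 : (1:ℝ≥0∞) + ∫⁻ ω, ENNReal.ofReal ((σ 0 ω)^2) ∂P < ⊤ :=
        ENNReal.add_lt_top.2 ⟨ENNReal.one_lt_top, hL2⟩
      exact absurd (lt_of_le_of_lt h9 h8) (lt_irrefl ⊤)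
    obtain ⟨δ, hδpos, hball⟩ := Metric.mem_nhds_iff.1 (mem_interior_iff_mem_nhds.1 hq0i)
    set q : ℝ := q0 + δ/2 with hqdef
    have hqS : q ∈ {q : ℝ | 1 ≤ q ∧ ⊥ < A q ∧ A q < ((q/2:ℝ):EReal)} := by
      apply hball
      rw [Metric.mem_ball, Real.dist_eq, hqdef, show q0 + δ/2 - q0 = δ/2 by ring,
        abs_of_pos (by linarith)]
      linarith
    obtain ⟨hq1, hqbot, hqlt⟩ := hqS
    have hq0q : q0 < q := by rw [hqdef]; linarith
    have hq2 : 2 < q := lt_of_le_of_lt hq02 hq0q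
    set T : Set ℝ := {p | 2 ≤ p ∧ Mom P σ p < ⊤} with hT
    have hT2 : (2:ℝ) ∈ T := ⟨le_refl 2, by rw [hmom2]; exact hL2⟩
    have hTub : ∀ p ∈ T, p ≤ q0 := by
      intro p hp
      by_contra hgt
      push_neg at hgt
      have h9 := mom_le (P:=P) (σ:=σ) hnonneg (a:=q0) (b:=p) (by linarith) hgt.le
      rw [hq0top] at h9
      have h10 : (1:ℝ≥0∞) + Mom P σ p < ⊤ :=
        ENNReal.add_lt_top.2 ⟨ENNReal.one_lt_top, hp.2⟩
      exact absurd (lt_of_le_of_lt h9 h10) (lt_irrefl ⊤)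
    set ps : ℝ := sSup T with hps
    have hTne : T.Nonempty := ⟨2, hT2⟩
    have hTbdd : BddAbove T := ⟨q0, hTub⟩
    have hps2 : 2 ≤ ps := le_csSup hTbdd hT2
    have hpsq0 : ps ≤ q0 := csSup_le hTne hTub
    have hpsq : ps < q := lt_of_le_of_lt hpsq0 hq0q
    have hmomtop : ∀ r, ps < r → Mom P σ r = ⊤ := by
      intro r hr
      by_contra hfin
      have hrT : r ∈ T := ⟨le_trans hps2 hr.le, lt_top_iff_ne_top.2 hfin⟩
      exact absurd (le_csSup hTbdd hrT) (not_le.2 hr)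
    have hmomfin : ∀ a, 0 ≤ a → a < ps → Mom P σ a < ⊤ := by
      intro a ha halt
      obtain ⟨x, hxT, hax⟩ := exists_lt_of_lt_csSup hTne halt
      have h9 := mom_le (P:=P) (σ:=σ) hnonneg ha hax.le
      exact lt_of_le_of_lt h9 (ENNReal.add_lt_top.2 ⟨ENNReal.one_lt_top, hxT.2⟩)
    set t0 : ℝ := (ps - 2) * (q / (q - 2)) with ht0
    have hq20 : (0:ℝ) < q - 2 := by linarith
    have ht0lt : t0 < ps := by
      rw [ht0, mul_div_assoc']
      rw [div_lt_iff₀ hq20]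
      nlinarith
    set m : ℝ := max 2 t0 with hm
    have hmle : m ≤ ps := max_le hps2 ht0lt.le
    set p : ℝ := (m + ps)/2 with hp
    have hm2 : 2 ≤ m := le_max_left 2 t0
    have hp2 : 2 ≤ p := by rw [hp]; linarith
    have hpps : p ≤ ps := by rw [hp]; linarith
    have ht0m : t0 ≤ m := le_max_right 2 t0
    have ht0p : t0 < p := by rw [hp]; linarith
    set gap : ℝ := p - t0 with hgap
    have hgappos : 0 < gap := by rw [hgap]; linarith
    set ε : ℝ := gap * (q - 2) / (4 * q) with hε
    have hεpos : 0 < ε := by rw [hε]; positivity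
    have hpmom : Mom P σ p < ⊤ := by
      rcases lt_or_eq_of_le hpps with hlt | heq
      · exact hmomfin p (by linarith) hlt
      · have hmps : m = ps := by rw [hp] at heq; linarith
        have hps2' : ps = 2 := by
          rcases max_choice 2 t0 with h | h
          · rw [hm, h] at hmps; linarith
          · rw [hm, h] at hmps; linarith
        rw [heq, hps2', hmom2]
        exact hL2
    have hKex : ∃ h0 : ℝ, 0 < h0 ∧ Ent P σ q h0 ≠ ⊤ := by
      by_contra hcon
      push_neg at hcon
      have hev : ∀ᶠ h in nhdsWithin (0:ℝ) (Set.Ioi 0),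
          ENNReal.log (Ent P σ q h) / (Real.log h : EReal) = (⊥:EReal) := by
        filter_upwards [eventually_of_mem (Ioo_mem_nhdsGT_of_mem
          (⟨le_rfl, zero_lt_one⟩ : (0:ℝ) ∈ Set.Ico 0 1)) (fun _ hx => hx)] with h hh
        rw [hcon h hh.1, ENNReal.log_top, top_div_neg (Real.log_neg hh.1 hh.2)]
      have hbot : A q = ⊥ := by rw [hA' q, limsup_congr hev, limsup_const]
      rw [hbot] at hqbot
      exact lt_irrefl _ hqbot
    obtain ⟨h0, hh0pos, hKtop⟩ := hKex
    have hEntmeas : Measurable fun ω => ENNReal.ofReal ((JJ σ h0 ω) ^ (q/2)) :=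
      ((Real.continuous_rpow_const (by positivity)).measurable.comp
        (JJ_meas hmeas h0)).ennreal_ofReal
    have hK0 : Ent P σ q h0 ≠ 0 := by
      intro h0eq
      apply hC2pos
      have hz := (lintegral_eq_zero_iff hEntmeas).1 h0eq
      have hae0 : ∀ᵐ ω ∂P, (∫⁻ s in Set.Ioc (0:ℝ) h0, ENNReal.ofReal ((σ s ω)^2)) = 0 := by
        filter_upwards [hz, aei hmeas hstat hL2 hh0pos] with ω h1 h2
        rw [← h2]
        have hJle : (JJ σ h0 ω) ^ (q/2) ≤ 0 := ENNReal.ofReal_eq_zero.1 h1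
        have hJ0 : JJ σ h0 ω = 0 := by
          by_contra hne
          have hJpos : 0 < JJ σ h0 ω := lt_of_le_of_ne (JJ_nonneg σ h0 ω) (Ne.symm hne)
          have := Real.rpow_pos_of_pos hJpos (q/2)
          linarith
        rw [hJ0]
        simp
      have hz2 : ∫⁻ ω, (∫⁻ s in Set.Ioc (0:ℝ) h0, ENNReal.ofReal ((σ s ω)^2)) ∂P = 0 := by
        rw [lintegral_congr_ae hae0, lintegral_zero]
      rw [fin_swap hmeas hstat hh0pos] at hz2
      rcases mul_eq_zero.1 hz2 with h | h
      · exact absurd h (ENNReal.ofReal_pos.2 hh0pos).ne'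
      · exact h
    have hrtop : Mom P σ (ps + ε) = ⊤ := hmomtop _ (by linarith)
    have htail : ∀ M0 : ℝ, 1 ≤ M0 → ∃ M, M0 ≤ M ∧
        (ENNReal.ofReal M) ^ (-(ps + 2*ε)) ≤ P {ω | M < σ 0 ω} := by
      intro M0 hM0
      obtain ⟨M, h1, h2⟩ := tail_big hmeas hnonneg (rr := ps + ε) (by linarith) hεpos
        hrtop M0 hM0
      refine ⟨M, h1, ?_⟩
      rwa [show -(ps + ε + ε) = -(ps + 2*ε) by ring] at h2
    have hrel : p + (2 - (ps + 2*ε)) * (q/(q-2)) = gap/2 := by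
      have hεval : 2 * ε * (q/(q-2)) = gap/2 := by
        rw [hε]
        field_simp
        ring
      have ht0val : t0 = (ps - 2) * (q/(q-2)) := ht0
      have : (2 - (ps + 2*ε)) * (q/(q-2)) = -t0 - 2*ε*(q/(q-2)) := by
        rw [ht0val]; ring
      rw [this, hεval, hgap]
      ring
    have hdiv := caseB hmeas hnonneg hstat hL2 hq2 hh0pos (hsupmeas h0 hh0pos) hK0 hKtop
      (by linarith : (0:ℝ) ≤ p) (by linarith : (0:ℝ) < ps + 2*ε)
      (by linarith : (0:ℝ) < gap/2) hrel htail
    exact ⟨h0, hh0pos, p, hp2, hpmom, hdiv⟩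
end

section
/- Let (Ω,F,P) be a probability space and let (F_h)_{0<h<1} be a family of nonnegative random variables such that: F_h(ω) ≤ F_{h'}(ω) whenever h ≤ h'; F_h → 0 almost surely as h → 0⁺; E[F_h^m] < +∞ for every m ≥ 1 and h ∈ (0,1); and E[F_h] > 0 for every h ∈ (0,1). Define A(q) := limsup_{h→0⁺} (log E[F_h^{q/2}]) / (log h). Then A is nondecreasing on [1,∞): for all 1 ≤ q < p, A(q) ≤ A(p). -/
open Filter MeasureTheory

/-- Remark 3 (rem:increasing): if the nonnegative, monotone-in-`h` family `F_h`
tends to `0` a.s. as `h → 0⁺`, has finite moments of all orders `m ≥ 1` and positive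
expectation, then the scaling exponent
`A(q) = limsup_{h→0⁺} log E[F_h^{q/2}] / log h` is nondecreasing on `[1,∞)`. -/
theorem stmt_5 {Ω : Type*} [MeasurableSpace Ω] (P : Measure Ω) [IsProbabilityMeasure P]
    (F : ℝ → Ω → ℝ)
    (hmeas : ∀ h : ℝ, 0 < h → h < 1 → Measurable (F h))
    (hnonneg : ∀ h : ℝ, 0 < h → h < 1 → ∀ ω, 0 ≤ F h ω)
    (hmono : ∀ h h' : ℝ, 0 < h → h ≤ h' → h' < 1 → ∀ ω, F h ω ≤ F h' ω)
    (hlim : ∀ᵐ ω ∂P, Tendsto (fun h => F h ω) (nhdsWithin 0 (Set.Ioi 0)) (nhds 0))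
    (hmom : ∀ m : ℝ, 1 ≤ m → ∀ h : ℝ, 0 < h → h < 1 →
      ∫⁻ ω, ENNReal.ofReal (F h ω ^ m) ∂P < ⊤)
    (hpos : ∀ h : ℝ, 0 < h → h < 1 → 0 < ∫⁻ ω, ENNReal.ofReal (F h ω) ∂P)
    (A : ℝ → EReal)
    (hA : ∀ q : ℝ, A q = limsup
      (fun h => ENNReal.log (∫⁻ ω, ENNReal.ofReal (F h ω ^ (q / 2)) ∂P)
        / (Real.log h : EReal))
      (nhdsWithin 0 (Set.Ioi 0))) :
    ∀ q p : ℝ, 1 ≤ q → q < p → A q ≤ A p := by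
  intro q p hq hqp
  have hq0 : (0:ℝ) < q := lt_of_lt_of_le one_pos hq
  have hp0 : (0:ℝ) < p := hq0.trans hqp
  have hq2 : (0:ℝ) < q / 2 := by linarith
  have hp2 : (0:ℝ) < p / 2 := by linarith
  haveI hlne : (nhdsWithin (0:ℝ) (Set.Ioi 0)).NeBot := nhdsGT_neBot 0
  have h12 : (0:ℝ) < 1/2 := by norm_num
  have h12' : (1:ℝ)/2 < 1 := by norm_num
  -- measurability of integrands
  have hmeasI : ∀ s : ℝ, 0 ≤ s → ∀ h : ℝ, 0 < h → h < 1 →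
      Measurable (fun ω => ENNReal.ofReal (F h ω ^ s)) := fun s hs h h0 h1 =>
    ((Real.continuous_rpow_const hs).measurable.comp (hmeas h h0 h1)).ennreal_ofReal
  -- pointwise bound
  have hptwise : ∀ s : ℝ, 0 ≤ s → ∀ x : ℝ, 0 ≤ x → x ^ s ≤ 1 + x ^ (max 1 s) := by
    intro s hs x hx
    rcases le_or_gt x 1 with hx1 | hx1
    · have h1 : x ^ s ≤ 1 := Real.rpow_le_one hx hx1 hs
      have h2 : 0 ≤ x ^ (max 1 s) := Real.rpow_nonneg hx _
      linarith
    · have h1 : x ^ s ≤ x ^ (max 1 s) :=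
        Real.rpow_le_rpow_of_exponent_le hx1.le (le_max_right 1 s)
      linarith
  -- finiteness of the integrals
  have hItop : ∀ s : ℝ, 0 ≤ s → ∀ h : ℝ, 0 < h → h < 1 →
      (∫⁻ ω, ENNReal.ofReal (F h ω ^ s) ∂P) ≠ ⊤ := by
    intro s hs h h0 h1
    have hb : ∀ ω, ENNReal.ofReal (F h ω ^ s)
        ≤ 1 + ENNReal.ofReal (F h ω ^ (max 1 s)) := by
      intro ω
      calc ENNReal.ofReal (F h ω ^ s) ≤ ENNReal.ofReal (1 + F h ω ^ (max 1 s)) :=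
            ENNReal.ofReal_le_ofReal (hptwise s hs _ (hnonneg h h0 h1 ω))
        _ = 1 + ENNReal.ofReal (F h ω ^ (max 1 s)) := by
            rw [ENNReal.ofReal_add zero_le_one (Real.rpow_nonneg (hnonneg h h0 h1 ω) _)]
            simp
    refine ne_of_lt (lt_of_le_of_lt (lintegral_mono hb) ?_)
    rw [lintegral_add_left measurable_const]
    simp only [lintegral_const, measure_univ, mul_one]
    exact ENNReal.add_lt_top.2 ⟨ENNReal.one_lt_top, hmom (max 1 s) (le_max_left 1 s) h h0 h1⟩
  -- positivity of the integrals
  have hIpos : ∀ s : ℝ, 0 < s → ∀ h : ℝ, 0 < h → h < 1 →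
      (∫⁻ ω, ENNReal.ofReal (F h ω ^ s) ∂P) ≠ 0 := by
    intro s hs h h0 h1 hzero
    rw [lintegral_eq_zero_iff (hmeasI s hs.le h h0 h1)] at hzero
    have hz : (∫⁻ ω, ENNReal.ofReal (F h ω) ∂P) = 0 := by
      rw [lintegral_eq_zero_iff ((hmeas h h0 h1).ennreal_ofReal)]
      filter_upwards [hzero] with ω hω
      simp only [Pi.zero_apply, ENNReal.ofReal_eq_zero] at hω ⊢
      by_contra hFpos
      push_neg at hFpos
      exact absurd hω (not_le.2 (Real.rpow_pos_of_pos hFpos s))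
    exact absurd hz (hpos h h0 h1).ne'
  -- eventual smallness of h
  have hev : ∀ᶠ h in nhdsWithin (0:ℝ) (Set.Ioi 0), h ∈ Set.Ioc (0:ℝ) (1/2) :=
    Ioc_mem_nhdsGT h12
  -- the integrals tend to zero
  have hItend : ∀ s : ℝ, 0 < s → Tendsto (fun h => ∫⁻ ω, ENNReal.ofReal (F h ω ^ s) ∂P)
      (nhdsWithin (0:ℝ) (Set.Ioi 0)) (nhds 0) := by
    intro s hs
    have h0int : ∫⁻ (ω : Ω), (fun _ => (0:ENNReal)) ω ∂P = 0 := lintegral_zero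
    rw [← h0int]
    refine tendsto_lintegral_filter_of_dominated_convergence
      (fun ω => 1 + ENNReal.ofReal (F (1/2) ω ^ (max 1 s))) ?_ ?_ ?_ ?_
    · filter_upwards [hev] with h hh
      exact hmeasI s hs.le h hh.1 (lt_of_le_of_lt hh.2 h12')
    · filter_upwards [hev] with h hh
      refine Eventually.of_forall (fun ω => ?_)
      have h1 : h < 1 := lt_of_le_of_lt hh.2 h12'
      have hFle : F h ω ≤ F (1/2) ω := hmono h (1/2) hh.1 hh.2 h12' ω
      calc ENNReal.ofReal (F h ω ^ s) ≤ ENNReal.ofReal (F (1/2) ω ^ s) :=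
            ENNReal.ofReal_le_ofReal
              (Real.rpow_le_rpow (hnonneg h hh.1 h1 ω) hFle hs.le)
        _ ≤ 1 + ENNReal.ofReal (F (1/2) ω ^ (max 1 s)) := by
            calc ENNReal.ofReal (F (1/2) ω ^ s)
                ≤ ENNReal.ofReal (1 + F (1/2) ω ^ (max 1 s)) :=
                  ENNReal.ofReal_le_ofReal (hptwise s hs.le _ (hnonneg (1/2) h12 h12' ω))
              _ = 1 + ENNReal.ofReal (F (1/2) ω ^ (max 1 s)) := by
                  rw [ENNReal.ofReal_add zero_le_one
                    (Real.rpow_nonneg (hnonneg (1/2) h12 h12' ω) _)]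
                  simp
    · rw [lintegral_add_left measurable_const]
      simp only [lintegral_const, measure_univ, mul_one]
      exact ENNReal.add_ne_top.2
        ⟨ENNReal.one_ne_top, (hmom (max 1 s) (le_max_left 1 s) (1/2) h12 h12').ne⟩
    · filter_upwards [hlim] with ω hω
      have h1 : Tendsto (fun h => F h ω ^ s) (nhdsWithin (0:ℝ) (Set.Ioi 0))
          (nhds ((0:ℝ) ^ s)) :=
        (Real.continuousAt_rpow_const 0 s (Or.inr hs.le)).tendsto.comp hω
      rw [Real.zero_rpow hs.ne'] at h1
      have h2 := (ENNReal.continuous_ofReal.tendsto 0).comp h1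
      simpa [Function.comp_def] using h2
  -- eventually the integrals are at most 1
  have hIle1 : ∀ s : ℝ, 0 < s → ∀ᶠ h in nhdsWithin (0:ℝ) (Set.Ioi 0),
      (∫⁻ ω, ENNReal.ofReal (F h ω ^ s) ∂P) ≤ 1 :=
    fun s hs => (hItend s hs).eventually (eventually_le_nhds zero_lt_one)
  -- A p is nonnegative
  have hApos : (0:EReal) ≤ A p := by
    rw [hA p]
    refine le_limsup_of_frequently_le ?_ (by isBoundedDefault)
    refine ((hev.and (hIle1 (p/2) hp2)).frequently).mono ?_
    rintro h ⟨hh, hle⟩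
    have h0 : 0 < h := hh.1
    have h1 : h < 1 := lt_of_le_of_lt hh.2 h12'
    have hlogh : Real.log h < 0 := Real.log_neg h0 h1
    have htopos : 0 < (∫⁻ ω, ENNReal.ofReal (F h ω ^ (p/2)) ∂P).toReal :=
      ENNReal.toReal_pos (hIpos (p/2) hp2 h h0 h1) (hItop (p/2) hp2.le h h0 h1)
    rw [ENNReal.log_pos_real' htopos]
    have hJle : (∫⁻ ω, ENNReal.ofReal (F h ω ^ (p/2)) ∂P).toReal ≤ 1 := by
      have := ENNReal.toReal_mono ENNReal.one_ne_top hle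
      simpa using this
    have hLle : Real.log (∫⁻ ω, ENNReal.ofReal (F h ω ^ (p/2)) ∂P).toReal ≤ 0 :=
      Real.log_nonpos htopos.le hJle
    exact EReal.div_nonneg_of_nonpos_of_nonpos (by exact_mod_cast hLle)
      (by exact_mod_cast hlogh.le)
  -- main estimate
  have main : ∀ θ : ℝ, 0 < θ → θ < 1 → ∀ b : ℝ, A p < (b : EReal) →
      A q ≤ ((1/θ * b : ℝ) : EReal) := by
    intro θ hθ0 hθ1 b hb
    have h1θ : 0 < 1 - θ := by linarith
    set m : ℝ := (p - θ * q) / (1 - θ) with hmdef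
    have hmsum : θ * q + (1 - θ) * m = p := by rw [hmdef]; field_simp; ring
    have hmp : p < m := by
      rw [hmdef, lt_div_iff₀ h1θ]; nlinarith
    have hm0 : 0 < m := hp0.trans hmp
    have hm2 : (0:ℝ) < m / 2 := by linarith
    have hevlt : ∀ᶠ h in nhdsWithin (0:ℝ) (Set.Ioi 0),
        ENNReal.log (∫⁻ ω, ENNReal.ofReal (F h ω ^ (p / 2)) ∂P) / (Real.log h : EReal)
          < (b:EReal) := by
      refine eventually_lt_of_limsup_lt ?_ (by isBoundedDefault)
      rw [← hA p]; exact hb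
    rw [hA q]
    refine limsup_le_of_le (by isBoundedDefault) ?_
    · filter_upwards [hev, hIle1 (q/2) hq2, hIle1 (m/2) hm2, hIle1 (p/2) hp2, hevlt]
        with h hh hq1 hm1 hp1 hblt
      have h0 : 0 < h := hh.1
      have h1 : h < 1 := lt_of_le_of_lt hh.2 h12'
      have hlogh : Real.log h < 0 := Real.log_neg h0 h1
      -- Hölder
      have hhol : (∫⁻ ω, ENNReal.ofReal (F h ω ^ (p/2)) ∂P)
          ≤ (∫⁻ ω, ENNReal.ofReal (F h ω ^ (q/2)) ∂P) ^ θ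
            * (∫⁻ ω, ENNReal.ofReal (F h ω ^ (m/2)) ∂P) ^ (1-θ) := by
        have hH := ENNReal.lintegral_mul_norm_pow_le (μ := P)
          ((hmeasI (q/2) hq2.le h h0 h1).aemeasurable)
          ((hmeasI (m/2) hm2.le h h0 h1).aemeasurable)
          hθ0.le h1θ.le (by ring)
        refine le_trans (le_of_eq ?_) hH
        refine lintegral_congr fun ω => ?_
        have hx : 0 ≤ F h ω := hnonneg h h0 h1 ω
        have e1 : q/2*θ + m/2*(1-θ) = p/2 := by linear_combination hmsum / 2
        calc ENNReal.ofReal (F h ω ^ (p/2))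
            = ENNReal.ofReal (F h ω ^ (q/2*θ) * F h ω ^ (m/2*(1-θ))) := by
              rw [← Real.rpow_add_of_nonneg hx
                (mul_nonneg (by linarith) hθ0.le) (mul_nonneg (by linarith) h1θ.le), e1]
          _ = ENNReal.ofReal (F h ω ^ (q/2*θ)) * ENNReal.ofReal (F h ω ^ (m/2*(1-θ))) :=
              ENNReal.ofReal_mul (Real.rpow_nonneg hx _)
          _ = ENNReal.ofReal ((F h ω ^ (q/2)) ^ θ) * ENNReal.ofReal ((F h ω ^ (m/2)) ^ (1-θ)) := by
              rw [Real.rpow_mul hx (q/2) θ, Real.rpow_mul hx (m/2) (1-θ)]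
          _ = ENNReal.ofReal (F h ω ^ (q/2)) ^ θ * ENNReal.ofReal (F h ω ^ (m/2)) ^ (1-θ) := by
              rw [ENNReal.ofReal_rpow_of_nonneg (Real.rpow_nonneg hx _) hθ0.le,
                ENNReal.ofReal_rpow_of_nonneg (Real.rpow_nonneg hx _) h1θ.le]
      -- real versions
      have hJqpos : 0 < (∫⁻ ω, ENNReal.ofReal (F h ω ^ (q/2)) ∂P).toReal :=
        ENNReal.toReal_pos (hIpos (q/2) hq2 h h0 h1) (hItop (q/2) hq2.le h h0 h1)
      have hJppos : 0 < (∫⁻ ω, ENNReal.ofReal (F h ω ^ (p/2)) ∂P).toReal :=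
        ENNReal.toReal_pos (hIpos (p/2) hp2 h h0 h1) (hItop (p/2) hp2.le h h0 h1)
      have hJmpos : 0 < (∫⁻ ω, ENNReal.ofReal (F h ω ^ (m/2)) ∂P).toReal :=
        ENNReal.toReal_pos (hIpos (m/2) hm2 h h0 h1) (hItop (m/2) hm2.le h h0 h1)
      set Jq := (∫⁻ ω, ENNReal.ofReal (F h ω ^ (q/2)) ∂P).toReal
      set Jp := (∫⁻ ω, ENNReal.ofReal (F h ω ^ (p/2)) ∂P).toReal
      set Jm := (∫⁻ ω, ENNReal.ofReal (F h ω ^ (m/2)) ∂P).toReal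
      have hJ : Jp ≤ Jq ^ θ * Jm ^ (1-θ) := by
        have hne : (∫⁻ ω, ENNReal.ofReal (F h ω ^ (q/2)) ∂P) ^ θ
            * (∫⁻ ω, ENNReal.ofReal (F h ω ^ (m/2)) ∂P) ^ (1-θ) ≠ ⊤ :=
          ENNReal.mul_ne_top (ENNReal.rpow_ne_top_of_nonneg hθ0.le (hItop (q/2) hq2.le h h0 h1))
            (ENNReal.rpow_ne_top_of_nonneg h1θ.le (hItop (m/2) hm2.le h h0 h1))
        have := ENNReal.toReal_mono hne hhol
        rwa [ENNReal.toReal_mul, ← ENNReal.toReal_rpow, ← ENNReal.toReal_rpow] at this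
      have hJqle : Jq ≤ 1 := by
        have := ENNReal.toReal_mono ENNReal.one_ne_top hq1; simpa using this
      have hJmle : Jm ≤ 1 := by
        have := ENNReal.toReal_mono ENNReal.one_ne_top hm1; simpa using this
      have hLq0 : Real.log Jq ≤ 0 := Real.log_nonpos hJqpos.le hJqle
      have hLm0 : Real.log Jm ≤ 0 := Real.log_nonpos hJmpos.le hJmle
      have hLp : Real.log Jp ≤ θ * Real.log Jq + (1-θ) * Real.log Jm := by
        calc Real.log Jp ≤ Real.log (Jq ^ θ * Jm ^ (1-θ)) := Real.log_le_log hJppos hJ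
          _ = θ * Real.log Jq + (1-θ) * Real.log Jm := by
              rw [Real.log_mul (Real.rpow_pos_of_pos hJqpos θ).ne'
                  (Real.rpow_pos_of_pos hJmpos (1-θ)).ne',
                Real.log_rpow hJqpos, Real.log_rpow hJmpos]
      have hθLq : Real.log Jp ≤ θ * Real.log Jq := by
        nlinarith [mul_nonneg h1θ.le (neg_nonneg.2 hLm0)]
      -- convert hypothesis hblt to real
      rw [ENNReal.log_pos_real' hJppos, ← EReal.coe_div] at hblt
      have hblt' : Real.log Jp / Real.log h < b := by exact_mod_cast hblt
      -- goal to real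
      rw [ENNReal.log_pos_real' hJqpos, ← EReal.coe_div]
      refine EReal.coe_le_coe_iff.2 ?_
      have step1 : θ * Real.log Jq / Real.log h ≤ Real.log Jp / Real.log h :=
        div_le_div_of_nonpos_of_le hlogh.le hθLq
      have step2 : Real.log Jq / Real.log h ≤ (Real.log Jp / Real.log h) / θ := by
        rw [le_div_iff₀ hθ0]
        calc Real.log Jq / Real.log h * θ = θ * Real.log Jq / Real.log h := by ring
          _ ≤ Real.log Jp / Real.log h := step1
      calc Real.log Jq / Real.log h ≤ (Real.log Jp / Real.log h) / θ := step2
        _ ≤ b / θ := by gcongr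
        _ = 1/θ * b := by ring
  -- conclude
  rcases eq_or_ne (A p) ⊤ with htop | htop
  · rw [htop]; exact le_top
  · refine le_of_forall_gt_imp_ge_of_dense fun d hd => ?_
    obtain ⟨b, hb1, hb2⟩ := EReal.exists_between_coe_real hd
    obtain ⟨b', hb'1, hb'2⟩ := EReal.exists_between_coe_real hb2
    have hb0 : 0 < b := by exact_mod_cast lt_of_le_of_lt hApos hb1
    have hbb' : b < b' := by exact_mod_cast hb'1
    have hb'0 : 0 < b' := hb0.trans hbb'
    have hθ0 : 0 < b / b' := div_pos hb0 hb'0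
    have hθ1 : b / b' < 1 := (div_lt_one hb'0).2 hbb'
    have hmain := main (b/b') hθ0 hθ1 b hb1
    have heq : 1/(b/b') * b = b' := by field_simp
    rw [heq] at hmain
    exact hmain.trans hb'2.le
end

section
/- Let a ≥ 0, h > 0 be real numbers, let l, q, p be reals with 1 ≤ l < q < p, and let B ∈ ℝ. Then a^p / h^B ≤ (l/q) · a^q / h^{Bq/l} + ((q−l)/q) · a^{q(p−l)/(q−l)}. -/
/-- Young-type pointwise inequality (2.14) of the paper. -/
theorem stmt_8 (a h : ℝ) (ha : 0 ≤ a) (hh : 0 < h)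
    (l q p : ℝ) (hl : 1 ≤ l) (hlq : l < q) (hqp : q < p) (B : ℝ) :
    a ^ p / h ^ B ≤
      (l / q) * (a ^ q / h ^ (B * q / l)) + ((q - l) / q) * a ^ (q * (p - l) / (q - l)) := by
  have hl0 : (0:ℝ) < l := lt_of_lt_of_le zero_lt_one hl
  have hq0 : (0:ℝ) < q := hl0.trans hlq
  have hql : (0:ℝ) < q - l := by linarith
  have hconj : (q / l).HolderConjugate (q / (q - l)) := by
    rw [Real.holderConjugate_iff]; constructor
    · rw [lt_div_iff₀ hl0]; linarith
    · field_simp; ring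
  have hα : 0 ≤ a ^ l / h ^ B := div_nonneg (Real.rpow_nonneg ha l) (Real.rpow_nonneg hh.le B)
  have hβ : 0 ≤ a ^ (p - l) := Real.rpow_nonneg ha _
  have key := Real.young_inequality_of_nonneg hα hβ hconj
  have e1 : a ^ l / h ^ B * a ^ (p - l) = a ^ p / h ^ B := by
    rw [div_mul_eq_mul_div, ← Real.rpow_add' ha (by linarith)]
    ring_nf
  have e2 : (a ^ l / h ^ B) ^ (q / l) = a ^ q / h ^ (B * q / l) := by
    rw [Real.div_rpow (Real.rpow_nonneg ha l) (Real.rpow_nonneg hh.le B),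
      ← Real.rpow_mul ha, ← Real.rpow_mul hh.le]
    congr 1 <;> field_simp <;> ring
  have e3 : (a ^ (p - l)) ^ (q / (q - l)) = a ^ (q * (p - l) / (q - l)) := by
    rw [← Real.rpow_mul ha]
    ring_nf
  rw [e1, e2, e3] at key
  refine key.trans_eq ?_
  field_simp
end

section
/- Let g : ℝ → ℝ be differentiable on [0,∞) with g(0) = 0, and suppose there exists B > 0 such that for every t ≥ 0, if g(t) = 0 then g'(t) ≥ B. Then g(t) ≥ 0 for all t ≥ 0. -/
/-- No-downcrossing lemma: a differentiable function on `[0,∞)` vanishing at `0`,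
whose derivative is bounded below by some `B > 0` at every zero, stays nonnegative. -/
theorem stmt_9 (g : ℝ → ℝ) (hdiff : DifferentiableOn ℝ g (Set.Ici 0))
    (hg0 : g 0 = 0) (B : ℝ) (hB : 0 < B)
    (hder : ∀ t, 0 ≤ t → g t = 0 → B ≤ derivWithin g (Set.Ici 0) t) :
    ∀ t, 0 ≤ t → 0 ≤ g t := by
  intro t ht
  by_contra hneg
  push_neg at hneg
  have hcont : ContinuousOn g (Set.Ici 0) := hdiff.continuousOn
  set S : Set ℝ := Set.Icc 0 t ∩ g ⁻¹' Set.Iio 0 with hS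
  have htS : t ∈ S := ⟨⟨ht, le_refl t⟩, hneg⟩
  have hne : S.Nonempty := ⟨t, htS⟩
  have hbdd : BddBelow S := ⟨0, fun u hu => hu.1.1⟩
  set s := sInf S with hs
  have hs0 : 0 ≤ s := le_csInf hne fun u hu => hu.1.1
  have hst : s ≤ t := csInf_le hbdd htS
  -- g s ≤ 0
  have hgs_le : g s ≤ 0 := by
    have hcont' : ContinuousOn g (Set.Icc 0 t) := hcont.mono fun u hu => hu.1
    have hclosed : IsClosed (Set.Icc 0 t ∩ g ⁻¹' Set.Iic 0) :=
      hcont'.preimage_isClosed_of_isClosed isClosed_Icc isClosed_Iic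
    have hsub : S ⊆ Set.Icc 0 t ∩ g ⁻¹' Set.Iic 0 :=
      fun u hu => ⟨hu.1, le_of_lt (show g u < 0 from hu.2)⟩
    have : s ∈ Set.Icc 0 t ∩ g ⁻¹' Set.Iic 0 :=
      hclosed.closure_subset (closure_mono hsub (csInf_mem_closure hne hbdd))
    exact this.2
  -- g s ≥ 0
  have hgs_ge : 0 ≤ g s := by
    rcases eq_or_lt_of_le hs0 with h0 | h0
    · rw [← h0, hg0]
    · have hnb : (nhdsWithin s (Set.Ico 0 s)).NeBot := by
        apply mem_closure_iff_nhdsWithin_neBot.1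
        rw [closure_Ico (ne_of_lt h0)]
        exact ⟨hs0, le_refl s⟩
      have htend : Filter.Tendsto g (nhdsWithin s (Set.Ico 0 s)) (nhds (g s)) :=
        (hcont s hs0).mono (fun u hu => hu.1) |>.tendsto
      refine ge_of_tendsto htend ?_
      filter_upwards [self_mem_nhdsWithin] with u hu
      by_contra hgu
      push_neg at hgu
      have huS : u ∈ S := ⟨⟨hu.1, le_of_lt (lt_of_lt_of_le hu.2 hst)⟩, hgu⟩
      exact absurd (csInf_le hbdd huS) (not_le.2 hu.2)
  have hgs : g s = 0 := le_antisymm hgs_le hgs_ge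
  -- derivative at s
  set d := derivWithin g (Set.Ici 0) s with hd
  have hBd : B ≤ d := hder s hs0 hgs
  have hder' : HasDerivWithinAt g d (Set.Ici 0) s := (hdiff s hs0).hasDerivWithinAt
  have hslope : Filter.Tendsto (slope g s) (nhdsWithin s (Set.Ici 0 \ {s})) (nhds d) :=
    hasDerivWithinAt_iff_tendsto_slope.1 hder'
  have hev : ∀ᶠ u in nhdsWithin s (Set.Ici 0 \ {s}), 0 < slope g s u :=
    hslope.eventually (eventually_gt_nhds (lt_of_lt_of_le hB hBd))
  rw [Filter.eventually_iff, Metric.mem_nhdsWithin_iff] at hev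
  obtain ⟨ε, hε, hball⟩ := hev
  obtain ⟨u, huS, hult⟩ := Real.lt_sInf_add_pos hne hε
  have hsu : s ≤ u := csInf_le hbdd huS
  have hne' : u ≠ s := fun h => by
    have : g s < 0 := h ▸ huS.2
    linarith
  have hlt : s < u := lt_of_le_of_ne hsu (Ne.symm hne')
  have hdist : dist u s < ε := by
    rw [Real.dist_eq, abs_of_nonneg (by linarith)]
    linarith
  have hpos : 0 < slope g s u := hball ⟨Metric.mem_ball.2 hdist, huS.1.1, hne'⟩
  have : slope g s u < 0 := by
    rw [slope_def_field, hgs]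
    exact div_neg_of_neg_of_pos (by simpa using huS.2) (by linarith)
  linarith
end

section
/- Let μ be a probability measure on [0,∞) whose tail function G(x) := μ((x,∞)) is strictly positive for all x > 0 and regularly varying at infinity with exponent −ξ, where ξ > 0. Then for every real p > ξ: lim_{x→∞} (log ∫_{[0,x]} u^p μ(du)) / (log x) = p − ξ. -/
open Filter MeasureTheory

/-- Dyadic sandwich: every `t ≥ t₀ > 0` lies between consecutive dyadic multiples of `t₀`. -/
lemma dyadic_sandwich' (t₀ t : ℝ) (ht₀ : 0 < t₀) (h : t₀ ≤ t) :
    ∃ n : ℕ, t₀ * 2 ^ (n : ℝ) ≤ t ∧ t ≤ t₀ * 2 ^ ((n : ℝ) + 1) := by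
  have htt : 0 < t / t₀ := div_pos (ht₀.trans_le h) ht₀
  have h1t : 1 ≤ t / t₀ := (one_le_div ht₀).2 h
  have hlb : 0 ≤ Real.logb 2 (t / t₀) := Real.logb_nonneg one_lt_two h1t
  refine ⟨⌊Real.logb 2 (t / t₀)⌋₊, ?_, ?_⟩
  · have h2 : (2:ℝ) ^ ((⌊Real.logb 2 (t / t₀)⌋₊ : ℕ) : ℝ) ≤ 2 ^ Real.logb 2 (t / t₀) :=
      Real.rpow_le_rpow_of_exponent_le one_le_two (Nat.floor_le hlb)
    rw [Real.rpow_logb two_pos (by norm_num) htt] at h2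
    calc t₀ * 2 ^ ((⌊Real.logb 2 (t / t₀)⌋₊ : ℕ) : ℝ) ≤ t₀ * (t / t₀) := by
          exact mul_le_mul_of_nonneg_left h2 ht₀.le
      _ = t := by field_simp
  · have h2 : (2:ℝ) ^ Real.logb 2 (t / t₀) ≤ 2 ^ (((⌊Real.logb 2 (t / t₀)⌋₊ : ℕ) : ℝ) + 1) := by
      apply Real.rpow_le_rpow_of_exponent_le one_le_two
      exact_mod_cast (Nat.lt_succ_floor _).le
    rw [Real.rpow_logb two_pos (by norm_num) htt] at h2
    calc t = t₀ * (t / t₀) := by field_simp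
      _ ≤ t₀ * 2 ^ (((⌊Real.logb 2 (t / t₀)⌋₊ : ℕ) : ℝ) + 1) :=
          mul_le_mul_of_nonneg_left h2 ht₀.le

/-- From a one-step dyadic decay estimate, an eventual power upper bound. -/
lemma geom_upper' (G : ℝ → ℝ) (hanti : ∀ ⦃s t : ℝ⦄, s ≤ t → G t ≤ G s)
    (e t₀ : ℝ) (he : e < 0) (ht₀ : 1 ≤ t₀)
    (hstep : ∀ t, t₀ ≤ t → G (2 * t) ≤ 2 ^ e * G t) :
    ∃ C, 0 < C ∧ ∀ t, t₀ ≤ t → G t ≤ C * t ^ e := by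
  have ht₀0 : (0:ℝ) < t₀ := lt_of_lt_of_le one_pos ht₀
  set D : ℝ := |G t₀| + 1 with hD
  have hD0 : 0 < D := by positivity
  have key : ∀ n : ℕ, G (t₀ * 2 ^ (n : ℝ)) ≤ D * 2 ^ (e * (n : ℝ)) := by
    intro n
    induction n with
    | zero => simpa using (le_abs_self (G t₀)).trans (by linarith [le_abs_self (G t₀)])
    | succ n ih =>
      have harg : t₀ * 2 ^ (((n:ℕ):ℝ) + 1) = 2 * (t₀ * 2 ^ ((n:ℕ):ℝ)) := by
        rw [Real.rpow_add two_pos, Real.rpow_one]; ring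
      have ht : t₀ ≤ t₀ * 2 ^ ((n:ℕ):ℝ) := by
        nlinarith [Real.one_le_rpow (one_le_two) (by positivity : (0:ℝ) ≤ ((n:ℕ):ℝ)), ht₀0]
      have h1 : G (t₀ * 2 ^ (((n:ℕ):ℝ) + 1)) ≤ 2 ^ e * G (t₀ * 2 ^ ((n:ℕ):ℝ)) := by
        rw [harg]; exact hstep _ ht
      have h2 : (2:ℝ) ^ e * G (t₀ * 2 ^ ((n:ℕ):ℝ)) ≤ 2 ^ e * (D * 2 ^ (e * ((n:ℕ):ℝ))) :=
        mul_le_mul_of_nonneg_left ih (Real.rpow_nonneg (by norm_num) e)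
      have h3 : (2:ℝ) ^ e * (D * 2 ^ (e * ((n:ℕ):ℝ))) = D * 2 ^ (e * (((n:ℕ):ℝ) + 1)) := by
        rw [mul_add, Real.rpow_add two_pos, mul_one]; ring
      push_cast
      push_cast at h1 h2 h3
      linarith
  refine ⟨D * (2 * t₀) ^ (-e), by positivity, fun t ht => ?_⟩
  obtain ⟨n, hn1, hn2⟩ := dyadic_sandwich' t₀ t ht₀0 ht
  have ht0 : 0 < t := lt_of_lt_of_le ht₀0 ht
  have hGt : G t ≤ D * 2 ^ (e * (n : ℝ)) := (hanti hn1).trans (key n)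
  have hbase : t / (2 * t₀) ≤ 2 ^ ((n:ℕ):ℝ) := by
    rw [div_le_iff₀ (by positivity)]
    calc t ≤ t₀ * 2 ^ ((n:ℝ) + 1) := hn2
      _ = 2 ^ ((n:ℕ):ℝ) * (2 * t₀) := by rw [Real.rpow_add two_pos, Real.rpow_one]; ring
  have h4 : (2:ℝ) ^ (e * (n : ℝ)) ≤ (t / (2 * t₀)) ^ e := by
    rw [mul_comm, Real.rpow_mul (by norm_num : (0:ℝ) ≤ 2)]
    exact Real.rpow_le_rpow_of_nonpos (by positivity) hbase he.le
  have h5 : (t / (2 * t₀)) ^ e = (2 * t₀) ^ (-e) * t ^ e := by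
    rw [div_eq_mul_inv, Real.mul_rpow ht0.le (by positivity),
      Real.inv_rpow (by positivity), ← Real.rpow_neg (by positivity)]
    ring
  calc G t ≤ D * 2 ^ (e * (n : ℝ)) := hGt
    _ ≤ D * ((2 * t₀) ^ (-e) * t ^ e) := by
        apply mul_le_mul_of_nonneg_left _ hD0.le
        rw [← h5]; exact h4
    _ = D * (2 * t₀) ^ (-e) * t ^ e := by ring

/-- From a one-step dyadic lower estimate, an eventual power lower bound. -/
lemma geom_lower' (G : ℝ → ℝ) (hanti : ∀ ⦃s t : ℝ⦄, s ≤ t → G t ≤ G s)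
    (e t₀ : ℝ) (he : e < 0) (ht₀ : 1 ≤ t₀) (hpos : 0 < G t₀)
    (hstep : ∀ t, t₀ ≤ t → 2 ^ e * G t ≤ G (2 * t)) :
    ∃ c, 0 < c ∧ ∀ t, t₀ ≤ t → c * t ^ e ≤ G t := by
  have ht₀0 : (0:ℝ) < t₀ := lt_of_lt_of_le one_pos ht₀
  have key : ∀ n : ℕ, G t₀ * 2 ^ (e * (n : ℝ)) ≤ G (t₀ * 2 ^ (n : ℝ)) := by
    intro n
    induction n with
    | zero => simp
    | succ n ih =>
      have harg : t₀ * 2 ^ (((n:ℕ):ℝ) + 1) = 2 * (t₀ * 2 ^ ((n:ℕ):ℝ)) := by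
        rw [Real.rpow_add two_pos, Real.rpow_one]; ring
      have ht : t₀ ≤ t₀ * 2 ^ ((n:ℕ):ℝ) := by
        nlinarith [Real.one_le_rpow (one_le_two) (by positivity : (0:ℝ) ≤ ((n:ℕ):ℝ)), ht₀0]
      have h1 : 2 ^ e * G (t₀ * 2 ^ ((n:ℕ):ℝ)) ≤ G (t₀ * 2 ^ (((n:ℕ):ℝ) + 1)) := by
        rw [harg]; exact hstep _ ht
      have h2 : (2:ℝ) ^ e * (G t₀ * 2 ^ (e * ((n:ℕ):ℝ))) ≤ 2 ^ e * G (t₀ * 2 ^ ((n:ℕ):ℝ)) :=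
        mul_le_mul_of_nonneg_left ih (Real.rpow_nonneg (by norm_num) e)
      have h3 : (2:ℝ) ^ e * (G t₀ * 2 ^ (e * ((n:ℕ):ℝ))) = G t₀ * 2 ^ (e * (((n:ℕ):ℝ) + 1)) := by
        rw [mul_add, Real.rpow_add two_pos, mul_one]; ring
      push_cast
      push_cast at h1 h2 h3
      linarith
  refine ⟨G t₀ * (2 / t₀) ^ e, by positivity, fun t ht => ?_⟩
  obtain ⟨n, hn1, hn2⟩ := dyadic_sandwich' t₀ t ht₀0 ht
  have ht0 : 0 < t := lt_of_lt_of_le ht₀0 ht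
  have hGt : G t₀ * 2 ^ (e * ((n : ℝ) + 1)) ≤ G t := by
    have hk := key (n+1)
    push_cast at hk
    exact hk.trans (hanti hn2)
  have hbase : (2:ℝ) ^ ((n:ℝ) + 1) ≤ 2 * t / t₀ := by
    rw [le_div_iff₀ ht₀0, Real.rpow_add two_pos, Real.rpow_one]
    nlinarith [hn1]
  have h4 : (2 * t / t₀) ^ e ≤ (2:ℝ) ^ (e * ((n : ℝ) + 1)) := by
    rw [mul_comm e, Real.rpow_mul (by norm_num : (0:ℝ) ≤ 2)]
    exact Real.rpow_le_rpow_of_nonpos (by positivity) hbase he.le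
  have h5 : (2 * t / t₀) ^ e = (2 / t₀) ^ e * t ^ e := by
    rw [show 2 * t / t₀ = 2 / t₀ * t by ring, Real.mul_rpow (by positivity) ht0.le]
  calc G t₀ * (2 / t₀) ^ e * t ^ e = G t₀ * (2 * t / t₀) ^ e := by rw [h5]; ring
    _ ≤ G t₀ * 2 ^ (e * ((n : ℝ) + 1)) := mul_le_mul_of_nonneg_left h4 hpos.le
    _ ≤ G t := hGt


lemma int_rpow' (μ : Measure ℝ) [IsFiniteMeasure μ] (p : ℝ) (hp : 0 < p) (x : ℝ) :
    IntegrableOn (fun u : ℝ => u ^ p) (Set.Icc 0 x) μ := by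
  rcases le_or_gt 0 x with hx | hx
  · apply Measure.integrableOn_of_bounded (measure_ne_top μ _)
      (Real.continuous_rpow_const hp.le).aestronglyMeasurable (M := x ^ p)
    filter_upwards [ae_restrict_mem measurableSet_Icc] with u hu
    rw [Real.norm_eq_abs, abs_of_nonneg (Real.rpow_nonneg hu.1 p)]
    exact Real.rpow_le_rpow hu.1 hu.2 hp.le
  · rw [Set.Icc_eq_empty (by linarith)]
    exact integrableOn_empty

lemma moment_upper' (μ : Measure ℝ) [IsProbabilityMeasure μ] (p e C t₀ : ℝ)
    (hp : 0 < p) (he : e < 0) (hq : 0 < p + e) (hC : 0 < C) (ht₀ : 1 ≤ t₀)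
    (htail : ∀ t, t₀ ≤ t → (μ (Set.Ioi t)).toReal ≤ C * t ^ e) :
    ∃ B, 0 < B ∧ ∀ x, t₀ ≤ x → ∫ u in Set.Icc 0 x, u ^ p ∂μ ≤ B * x ^ (p + e) := by
  have ht₀0 : (0:ℝ) < t₀ := lt_of_lt_of_le one_pos ht₀
  set q : ℝ := p + e with hqdef
  have h2q : (1:ℝ) < 2 ^ q := Real.one_lt_rpow_iff_of_pos two_pos |>.2 (Or.inl ⟨one_lt_two, hq⟩)
  set C₂ : ℝ := C * 2 ^ p * t₀ ^ q with hC₂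
  have hC₂0 : 0 < C₂ := by positivity
  set D : ℝ := t₀ ^ p + C₂ / (2 ^ q - 1) with hDdef
  have hF : (0:ℝ) < 2 ^ q - 1 := by linarith
  have hD0 : 0 < D := add_pos (Real.rpow_pos_of_pos ht₀0 p) (div_pos hC₂0 hF)
  -- an elementary bound on a set integral by sup of integrand times 1
  have hbd : ∀ a b : ℝ, 0 ≤ a → a ≤ b →
      ∫ u in Set.Ioc a b, u ^ p ∂μ ≤ b ^ p * (μ (Set.Ioi a)).toReal := by
    intro a b ha hab
    have hsub : Set.Ioc a b ⊆ Set.Icc 0 b := fun u hu => ⟨ha.trans hu.1.le, hu.2⟩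
    have hint : IntegrableOn (fun u : ℝ => u ^ p) (Set.Ioc a b) μ :=
      (int_rpow' μ p hp b).mono_set hsub
    calc ∫ u in Set.Ioc a b, u ^ p ∂μ ≤ ∫ _ in Set.Ioc a b, b ^ p ∂μ := by
          apply setIntegral_mono_on hint (integrableOn_const (measure_ne_top μ _))
            measurableSet_Ioc
          intro u hu
          exact Real.rpow_le_rpow (ha.trans hu.1.le) hu.2 hp.le
      _ = (μ (Set.Ioc a b)).toReal * b ^ p := by rw [setIntegral_const]; rfl
      _ ≤ (μ (Set.Ioi a)).toReal * b ^ p := by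
          apply mul_le_mul_of_nonneg_right _ (Real.rpow_nonneg (ha.trans hab) p)
          exact ENNReal.toReal_mono (measure_ne_top μ _)
            (measure_mono Set.Ioc_subset_Ioi_self)
      _ = b ^ p * (μ (Set.Ioi a)).toReal := mul_comm _ _
  have key : ∀ K : ℕ, ∫ u in Set.Icc 0 (t₀ * 2 ^ (K : ℝ)), u ^ p ∂μ ≤ D * (2 ^ (K : ℝ)) ^ q := by
    intro K
    induction K with
    | zero =>
      simp only [Nat.cast_zero, Real.rpow_zero, mul_one, Real.one_rpow]
      calc ∫ u in Set.Icc 0 t₀, u ^ p ∂μ ≤ ∫ _ in Set.Icc 0 t₀, t₀ ^ p ∂μ := by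
            apply setIntegral_mono_on (int_rpow' μ p hp t₀)
              (integrableOn_const (measure_ne_top μ _)) measurableSet_Icc
            intro u hu
            exact Real.rpow_le_rpow hu.1 hu.2 hp.le
        _ = (μ (Set.Icc 0 t₀)).toReal * t₀ ^ p := by rw [setIntegral_const]; rfl
        _ ≤ 1 * t₀ ^ p := by
            apply mul_le_mul_of_nonneg_right _ (Real.rpow_nonneg ht₀0.le p)
            exact le_trans (ENNReal.toReal_mono (by simp) (prob_le_one)) (by simp)
        _ = t₀ ^ p := one_mul _
        _ ≤ D := by
            rw [hDdef]
            nlinarith [div_pos hC₂0 (by linarith : (0:ℝ) < 2 ^ q - 1)]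
    | succ K ih =>
      have hs : (0:ℝ) < 2 ^ ((K:ℕ):ℝ) := Real.rpow_pos_of_pos two_pos _
      have h1K : (1:ℝ) ≤ 2 ^ ((K:ℕ):ℝ) := Real.one_le_rpow one_le_two (by positivity)
      set a : ℝ := t₀ * 2 ^ ((K:ℕ):ℝ) with hadef
      have ha0 : 0 < a := by positivity
      have ht₀a : t₀ ≤ a := by nlinarith
      have h1a : 1 ≤ a := ht₀.trans ht₀a
      have hb : t₀ * 2 ^ (((K:ℕ):ℝ) + 1) = 2 * a := by
        rw [Real.rpow_add two_pos, Real.rpow_one, hadef]; ring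
      have hsplit : ∫ u in Set.Icc 0 (2 * a), u ^ p ∂μ =
          (∫ u in Set.Icc 0 a, u ^ p ∂μ) + ∫ u in Set.Ioc a (2 * a), u ^ p ∂μ := by
        rw [← Set.Icc_union_Ioc_eq_Icc ha0.le (by linarith),
          setIntegral_union ((Set.Iic_disjoint_Ioc le_rfl).mono Set.Icc_subset_Iic_self le_rfl) measurableSet_Ioc
            (int_rpow' μ p hp a)
            ((int_rpow' μ p hp (2 * a)).mono_set
              (fun u hu => ⟨ha0.le.trans hu.1.le, hu.2⟩))]
      have htail_a : (μ (Set.Ioi a)).toReal ≤ C * a ^ e := htail a ht₀a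
      have h2 : ∫ u in Set.Ioc a (2 * a), u ^ p ∂μ ≤ (2 * a) ^ p * (C * a ^ e) := by
        refine le_trans (hbd a (2 * a) ha0.le (by linarith)) ?_
        apply mul_le_mul_of_nonneg_left htail_a (Real.rpow_nonneg (by linarith) p)
      have h3 : (2 * a) ^ p * (C * a ^ e) = C₂ * (2 ^ ((K:ℕ):ℝ)) ^ q := by
        have e1 : a ^ e = t₀ ^ e * (2 ^ ((K:ℕ):ℝ)) ^ e := by
          rw [hadef, Real.mul_rpow ht₀0.le hs.le]
        have e0 : (2 * a) ^ p = 2 ^ p * (t₀ ^ p * (2 ^ ((K:ℕ):ℝ)) ^ p) := by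
          rw [hadef, Real.mul_rpow (by norm_num) (by positivity),
            Real.mul_rpow ht₀0.le hs.le]
        have e2 : t₀ ^ q = t₀ ^ p * t₀ ^ e := by rw [hqdef, Real.rpow_add ht₀0]
        have e3 : ((2:ℝ) ^ ((K:ℕ):ℝ)) ^ q = ((2:ℝ) ^ ((K:ℕ):ℝ)) ^ p * ((2:ℝ) ^ ((K:ℕ):ℝ)) ^ e := by
          rw [hqdef, Real.rpow_add hs]
        rw [e0, e1, hC₂, e2, e3]
        ring
      have hgoal : D * (2 ^ ((K:ℕ):ℝ)) ^ q + C₂ * (2 ^ ((K:ℕ):ℝ)) ^ q ≤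
          D * (2 ^ (((K:ℕ):ℝ) + 1)) ^ q := by
        have : (2:ℝ) ^ (((K:ℕ):ℝ) + 1) = 2 ^ ((K:ℕ):ℝ) * 2 := by
          rw [Real.rpow_add two_pos, Real.rpow_one]
        rw [this, Real.mul_rpow hs.le (by norm_num)]
        have hDC : D + C₂ ≤ D * 2 ^ q := by
          have hcancel : C₂ / (2 ^ q - 1) * (2 ^ q - 1) = C₂ :=
            div_mul_cancel₀ _ (ne_of_gt hF)
          have hDF : D * (2 ^ q - 1) = t₀ ^ p * (2 ^ q - 1) + C₂ := by
            rw [hDdef]; rw [add_mul, hcancel]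
          have hD2 : D * 2 ^ q = D * (2 ^ q - 1) + D := by ring
          nlinarith [mul_nonneg (Real.rpow_nonneg ht₀0.le p) hF.le]
        have hsq : (0:ℝ) < (2 ^ ((K:ℕ):ℝ)) ^ q := Real.rpow_pos_of_pos hs q
        nlinarith
      have hfin : ∫ u in Set.Icc 0 (t₀ * 2 ^ (((K:ℕ):ℝ) + 1)), u ^ p ∂μ ≤
          D * (2 ^ (((K:ℕ):ℝ) + 1)) ^ q := by
        rw [hb, hsplit]
        calc (∫ u in Set.Icc 0 a, u ^ p ∂μ) + ∫ u in Set.Ioc a (2 * a), u ^ p ∂μ ≤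
            D * (2 ^ ((K:ℕ):ℝ)) ^ q + C₂ * (2 ^ ((K:ℕ):ℝ)) ^ q := by
              apply add_le_add ih (h2.trans_eq h3)
          _ ≤ D * (2 ^ (((K:ℕ):ℝ) + 1)) ^ q := hgoal
      push_cast
      push_cast at hfin
      exact hfin
  refine ⟨D * (2 / t₀) ^ q, by positivity, fun x hx => ?_⟩
  obtain ⟨n, hn1, hn2⟩ := dyadic_sandwich' t₀ x ht₀0 hx
  have hx0 : 0 < x := lt_of_lt_of_le ht₀0 hx
  have hk := key (n + 1)
  push_cast at hk
  have hmono : ∫ u in Set.Icc 0 x, u ^ p ∂μ ≤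
      ∫ u in Set.Icc 0 (t₀ * 2 ^ ((n:ℝ) + 1)), u ^ p ∂μ := by
    apply setIntegral_mono_set (int_rpow' μ p hp _)
    · filter_upwards [ae_restrict_mem measurableSet_Icc] with u hu
      exact Real.rpow_nonneg hu.1 p
    · exact HasSubset.Subset.eventuallyLE (Set.Icc_subset_Icc le_rfl hn2)
  have hpow : (2:ℝ) ^ ((n:ℝ) + 1) ≤ 2 * x / t₀ := by
    rw [le_div_iff₀ ht₀0, Real.rpow_add two_pos, Real.rpow_one]
    nlinarith
  have hpq : ((2:ℝ) ^ ((n:ℝ) + 1)) ^ q ≤ (2 * x / t₀) ^ q :=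
    Real.rpow_le_rpow (by positivity) hpow hq.le
  have hxq : (2 * x / t₀ : ℝ) ^ q = (2 / t₀) ^ q * x ^ q := by
    rw [show 2 * x / t₀ = 2 / t₀ * x by ring, Real.mul_rpow (by positivity) hx0.le]
  calc ∫ u in Set.Icc 0 x, u ^ p ∂μ ≤ D * ((2:ℝ) ^ ((n:ℝ) + 1)) ^ q := hmono.trans hk
    _ ≤ D * ((2 / t₀) ^ q * x ^ q) := by
        apply mul_le_mul_of_nonneg_left (hpq.trans_eq hxq) hD0.le
    _ = D * (2 / t₀) ^ q * x ^ q := by ring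

/-- Relation (3.30) (main23): truncated moments of a distribution with regularly
varying tail of index `-ξ`, for `p > ξ`. -/
theorem stmt_16 (μ : Measure ℝ) [IsProbabilityMeasure μ] (hsupp : μ (Set.Iio 0) = 0)
    (ξ : ℝ) (hξ : 0 < ξ)
    (hpos : ∀ x : ℝ, 0 < x → 0 < (μ (Set.Ioi x)).toReal)
    (hRV : ∀ x : ℝ, 0 < x →
      Tendsto (fun t => (μ (Set.Ioi (t * x))).toReal / (μ (Set.Ioi t)).toReal)
        atTop (nhds (x ^ (-ξ)))) :
    ∀ p : ℝ, ξ < p →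
      Tendsto (fun x => Real.log (∫ u in Set.Icc 0 x, u ^ p ∂μ) / Real.log x)
        atTop (nhds (p - ξ)) := by
  intro p hp
  have hp0 : 0 < p := hξ.trans hp
  set G : ℝ → ℝ := fun t => (μ (Set.Ioi t)).toReal with hGdef
  have hGanti : ∀ ⦃s t : ℝ⦄, s ≤ t → G t ≤ G s := fun s t hst =>
    ENNReal.toReal_mono (measure_ne_top μ _) (measure_mono (Set.Ioi_subset_Ioi hst))
  rw [Metric.tendsto_nhds]
  intro ε hε
  set δ : ℝ := min (ε/2) (ξ/2) with hδdef
  have hδ0 : 0 < δ := lt_min (by linarith) (by linarith)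
  have hδξ : δ < ξ := lt_of_le_of_lt (min_le_right _ _) (by linarith)
  have hδε : δ ≤ ε/2 := min_le_left _ _
  have h2 := hRV 2 two_pos
  have hA : (2:ℝ) ^ (-ξ) < 2 ^ (-ξ + δ) :=
    (Real.rpow_lt_rpow_left_iff one_lt_two).2 (by linarith)
  have hB' : (2:ℝ) ^ (-ξ - δ) < 2 ^ (-ξ) :=
    (Real.rpow_lt_rpow_left_iff one_lt_two).2 (by linarith)
  set r : ℝ := (1 + 2 ^ (-ξ)) / 2 with hrdef
  have h2ξlt1 : (2:ℝ) ^ (-ξ) < 1 :=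
    Real.rpow_lt_one_of_one_lt_of_neg one_lt_two (by linarith)
  have h2ξpos : (0:ℝ) < 2 ^ (-ξ) := Real.rpow_pos_of_pos two_pos _
  have hr1 : r < 1 := by rw [hrdef]; linarith
  have hr2 : (2:ℝ) ^ (-ξ) < r := by rw [hrdef]; linarith
  obtain ⟨N, hN⟩ := eventually_atTop.1
    (((h2.eventually_lt_const hA).and (h2.eventually_const_lt hB')).and
      (h2.eventually_lt_const hr2))
  set t₀ : ℝ := max N 1 with ht₀def
  have ht₀1 : 1 ≤ t₀ := le_max_right N 1
  have ht₀0 : 0 < t₀ := lt_of_lt_of_le one_pos ht₀1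
  have hNt : ∀ t, t₀ ≤ t →
      (G (t * 2) / G t < 2 ^ (-ξ + δ) ∧ 2 ^ (-ξ - δ) < G (t * 2) / G t) ∧
        G (t * 2) / G t < r :=
    fun t ht => hN t (le_trans (le_max_left N 1) ht)
  have hGpos : ∀ t, t₀ ≤ t → 0 < G t := fun t ht => hpos t (lt_of_lt_of_le ht₀0 ht)
  have hstepU : ∀ t, t₀ ≤ t → G (2 * t) ≤ 2 ^ (-ξ + δ) * G t := by
    intro t ht
    have h := (hNt t ht).1.1
    rw [div_lt_iff₀ (hGpos t ht)] at h
    rw [mul_comm 2 t]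
    exact h.le
  have hstepL : ∀ t, t₀ ≤ t → 2 ^ (-ξ - δ) * G t ≤ G (2 * t) := by
    intro t ht
    have h := (hNt t ht).1.2
    rw [lt_div_iff₀ (hGpos t ht)] at h
    rw [mul_comm 2 t]
    exact h.le
  have hstepR : ∀ t, t₀ ≤ t → G (2 * t) < r * G t := by
    intro t ht
    have h := (hNt t ht).2
    rw [div_lt_iff₀ (hGpos t ht)] at h
    rw [mul_comm 2 t]
    exact h
  obtain ⟨C, hC, hCb⟩ := geom_upper' G hGanti (-ξ + δ) t₀ (by linarith) ht₀1 hstepU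
  obtain ⟨c, hc, hcb⟩ := geom_lower' G hGanti (-ξ - δ) t₀ (by linarith) ht₀1
    (hGpos t₀ le_rfl) hstepL
  obtain ⟨B, hB, hBb⟩ := moment_upper' μ p (-ξ + δ) C t₀ hp0 (by linarith)
    (by linarith) hC ht₀1 (fun t ht => hCb t ht)
  set b : ℝ := (1 - r) * c * (2:ℝ) ^ (ξ + δ - p) with hbdef
  have hb : 0 < b := by
    apply mul_pos (mul_pos (by linarith) hc) (Real.rpow_pos_of_pos two_pos _)
  -- lower bound on the truncated moment
  have hlow : ∀ x, 2 * t₀ ≤ x → b * x ^ (p - ξ - δ) ≤ ∫ u in Set.Icc 0 x, u ^ p ∂μ := by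
    intro x hx
    have hx2 : t₀ ≤ x / 2 := by linarith
    have hx0 : 0 < x := by linarith
    have hhalf : 0 < x / 2 := by linarith
    have hsplit : μ (Set.Ioi (x/2)) = μ (Set.Ioc (x/2) x) + μ (Set.Ioi x) := by
      rw [← Set.Ioc_union_Ioi_eq_Ioi (by linarith : x/2 ≤ x),
        measure_union (Set.Ioc_disjoint_Ioi le_rfl) measurableSet_Ioi]
    have hioc : (μ (Set.Ioc (x/2) x)).toReal = G (x/2) - G x := by
      have h := congrArg ENNReal.toReal hsplit
      rw [ENNReal.toReal_add (measure_ne_top μ _) (measure_ne_top μ _)] at h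
      have hG1 : (μ (Set.Ioi (x/2))).toReal = G (x/2) := rfl
      have hG2 : (μ (Set.Ioi x)).toReal = G x := rfl
      rw [hG1, hG2] at h
      linarith
    have hGr : G x < r * G (x/2) := by
      have h := hstepR (x/2) hx2
      rwa [show 2 * (x/2) = x by ring] at h
    have hc2 : c * (x/2) ^ (-ξ - δ) ≤ G (x/2) := hcb (x/2) hx2
    have hIoc_lb : (1 - r) * (c * (x/2) ^ (-ξ - δ)) ≤ (μ (Set.Ioc (x/2) x)).toReal := by
      rw [hioc]
      have h1 : (1 - r) * G (x/2) ≤ G (x/2) - G x := by nlinarith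
      have h2 : (1 - r) * (c * (x/2) ^ (-ξ - δ)) ≤ (1 - r) * G (x/2) :=
        mul_le_mul_of_nonneg_left hc2 (by linarith)
      linarith
    have hIlb : (x/2) ^ p * (μ (Set.Ioc (x/2) x)).toReal ≤
        ∫ u in Set.Ioc (x/2) x, u ^ p ∂μ := by
      apply setIntegral_ge_of_const_le_real measurableSet_Ioc (measure_ne_top μ _)
      · intro u hu
        exact Real.rpow_le_rpow hhalf.le hu.1.le hp0.le
      · exact (int_rpow' μ p hp0 x).mono_set (fun u hu => ⟨hhalf.le.trans hu.1.le, hu.2⟩)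
    have hmono : ∫ u in Set.Ioc (x/2) x, u ^ p ∂μ ≤ ∫ u in Set.Icc 0 x, u ^ p ∂μ := by
      apply setIntegral_mono_set (int_rpow' μ p hp0 x)
      · filter_upwards [ae_restrict_mem measurableSet_Icc] with u hu
        exact Real.rpow_nonneg hu.1 p
      · exact HasSubset.Subset.eventuallyLE (fun u hu => ⟨hhalf.le.trans hu.1.le, hu.2⟩)
    have halg : (x/2) ^ p * ((1 - r) * (c * (x/2) ^ (-ξ - δ))) = b * x ^ (p - ξ - δ) := by
      have h1 : (x/2) ^ p * (x/2) ^ (-ξ - δ) = (x/2) ^ (p - ξ - δ) := by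
        rw [← Real.rpow_add hhalf, show p + (-ξ - δ) = p - ξ - δ from by ring]
      have h2 : (x/2 : ℝ) ^ (p - ξ - δ) = x ^ (p - ξ - δ) * 2 ^ (ξ + δ - p) := by
        rw [div_eq_mul_inv, Real.mul_rpow hx0.le (by positivity),
          Real.inv_rpow (by norm_num), ← Real.rpow_neg (by norm_num),
          show -(p - ξ - δ) = ξ + δ - p from by ring]
      calc (x/2) ^ p * ((1 - r) * (c * (x/2) ^ (-ξ - δ)))
          = (1 - r) * c * ((x/2) ^ p * (x/2) ^ (-ξ - δ)) := by ring
        _ = (1 - r) * c * (x/2) ^ (p - ξ - δ) := by rw [h1]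
        _ = (1 - r) * c * (x ^ (p - ξ - δ) * 2 ^ (ξ + δ - p)) := by rw [h2]
        _ = b * x ^ (p - ξ - δ) := by rw [hbdef]; ring
    calc b * x ^ (p - ξ - δ) = (x/2) ^ p * ((1 - r) * (c * (x/2) ^ (-ξ - δ))) := halg.symm
      _ ≤ (x/2) ^ p * (μ (Set.Ioc (x/2) x)).toReal :=
          mul_le_mul_of_nonneg_left hIoc_lb (Real.rpow_nonneg hhalf.le p)
      _ ≤ ∫ u in Set.Ioc (x/2) x, u ^ p ∂μ := hIlb
      _ ≤ ∫ u in Set.Icc 0 x, u ^ p ∂μ := hmono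
  -- final squeeze
  set M : ℝ := (|Real.log B| + |Real.log b| + 1) * (2/ε) with hMdef
  filter_upwards [Real.tendsto_log_atTop.eventually_gt_atTop M,
    eventually_ge_atTop (2 * t₀), eventually_ge_atTop t₀, eventually_gt_atTop 1]
    with x hxM hx2t hxt hx1
  have hx0 : (0:ℝ) < x := lt_trans one_pos hx1
  have hlogx : 0 < Real.log x := Real.log_pos hx1
  have hIlow := hlow x hx2t
  have hIup := hBb x hxt
  rw [show p + (-ξ + δ) = p - ξ + δ from by ring] at hIup
  have hIpos : 0 < ∫ u in Set.Icc 0 x, u ^ p ∂μ :=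
    lt_of_lt_of_le (by positivity) hIlow
  have hup : Real.log (∫ u in Set.Icc 0 x, u ^ p ∂μ) ≤
      Real.log B + (p - ξ + δ) * Real.log x := by
    have h := Real.log_le_log hIpos hIup
    rwa [Real.log_mul (ne_of_gt hB) (ne_of_gt (Real.rpow_pos_of_pos hx0 _)),
      Real.log_rpow hx0] at h
  have hlo : Real.log b + (p - ξ - δ) * Real.log x ≤
      Real.log (∫ u in Set.Icc 0 x, u ^ p ∂μ) := by
    have h := Real.log_le_log (by positivity) hIlow
    rwa [Real.log_mul (ne_of_gt hb) (ne_of_gt (Real.rpow_pos_of_pos hx0 _)),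
      Real.log_rpow hx0] at h
  have hMcalc : ε/2 * M = |Real.log B| + |Real.log b| + 1 := by
    rw [hMdef]; field_simp
  have hMx := mul_lt_mul_of_pos_left hxM (by linarith : (0:ℝ) < ε/2)
  rw [hMcalc] at hMx
  have h1 : |Real.log B| < ε/2 * Real.log x := by
    have := abs_nonneg (Real.log b); linarith
  have h2 : |Real.log b| < ε/2 * Real.log x := by
    have := abs_nonneg (Real.log B); linarith
  have hδlog : δ * Real.log x ≤ ε/2 * Real.log x :=
    mul_le_mul_of_nonneg_right hδε hlogx.le
  rw [Real.dist_eq, abs_lt]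
  constructor
  · have key : (p - ξ - ε) * Real.log x < Real.log (∫ u in Set.Icc 0 x, u ^ p ∂μ) := by
      have hbB := neg_abs_le (Real.log b)
      have e1 : (p - ξ - δ) * Real.log x = (p - ξ) * Real.log x - δ * Real.log x := by ring
      have e2 : (p - ξ - ε) * Real.log x = (p - ξ) * Real.log x - ε * Real.log x := by ring
      linarith
    have hq := (lt_div_iff₀ hlogx).2 key
    linarith
  · have key : Real.log (∫ u in Set.Icc 0 x, u ^ p ∂μ) < (p - ξ + ε) * Real.log x := by
      have hbB := le_abs_self (Real.log B)
      have e1 : (p - ξ + δ) * Real.log x = (p - ξ) * Real.log x + δ * Real.log x := by ring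
      have e2 : (p - ξ + ε) * Real.log x = (p - ξ) * Real.log x + ε * Real.log x := by ring
      linarith
    have hq := (div_lt_iff₀ hlogx).2 key
    linarith
end

section
/- Let (Ω,F,P) be a probability space and Y : Ω → (0,∞) a random variable whose tail G(x) := P(Y > x) is strictly positive for all x > 0 and regularly varying at infinity with exponent −ξ, where ξ > 0. Let γ > 1, c > 0, and let r be a real number with r > ξ/(γ−1). Then lim_{h→0⁺} (log E[(1 + Y^{1−γ}/(c·h))^{−r}]) / (log h) = ξ/(γ−1). -/
open Filter MeasureTheory Real

lemma tail_pow_bounds (G : ℝ → ℝ) (hanti : Antitone G) (hpos : ∀ x : ℝ, 0 < x → 0 < G x)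
    {ξ : ℝ} (hξ : 0 < ξ)
    (h2 : Tendsto (fun t => G (t * 2) / G t) atTop (nhds ((2:ℝ) ^ (-ξ))))
    {ε : ℝ} (hε : 0 < ε) (hεξ : ε < ξ) :
    ∃ Cl Cu x0 : ℝ, 0 < Cl ∧ 0 < Cu ∧ 1 ≤ x0 ∧ ∀ x, x0 ≤ x →
      Cl * x ^ (-(ξ+ε)) ≤ G x ∧ G x ≤ Cu * x ^ (-(ξ-ε)) := by
  have hlt : (2:ℝ)^(-(ξ+ε)) < 2^(-ξ) :=
    Real.rpow_lt_rpow_of_exponent_lt one_lt_two (by linarith)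
  have hgt : (2:ℝ)^(-ξ) < 2^(-(ξ-ε)) :=
    Real.rpow_lt_rpow_of_exponent_lt one_lt_two (by linarith)
  obtain ⟨t0, ht0⟩ := eventually_atTop.1 ((h2.eventually_const_lt hlt).and
    (h2.eventually_lt_const hgt))
  set t1 : ℝ := max t0 1 with ht1def
  have ht1ge : (1:ℝ) ≤ t1 := le_max_right _ _
  have ht1pos : (0:ℝ) < t1 := lt_of_lt_of_le one_pos ht1ge
  have hGt1pos : 0 < G t1 := hpos t1 ht1pos
  -- single step bounds
  have step : ∀ t, t1 ≤ t → G t * 2^(-(ξ+ε)) ≤ G (t*2) ∧ G (t*2) ≤ G t * 2^(-(ξ-ε)) := by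
    intro t ht
    have htpos : 0 < t := lt_of_lt_of_le ht1pos ht
    have hGt : 0 < G t := hpos t htpos
    have := ht0 t (le_trans (le_max_left _ _) ht)
    constructor
    · have := this.1
      rw [lt_div_iff₀ hGt] at this
      linarith [this]
    · have := this.2
      rw [div_lt_iff₀ hGt] at this
      linarith [this]
  have ind : ∀ n : ℕ, G t1 * ((2:ℝ)^n) ^ (-(ξ+ε)) ≤ G (t1 * 2^n) ∧
      G (t1 * 2^n) ≤ G t1 * ((2:ℝ)^n) ^ (-(ξ-ε)) := by
    intro n
    induction n with
    | zero => simp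
    | succ n ih =>
      have h2n : (1:ℝ) ≤ 2^n := one_le_pow₀ one_le_two
      have h2npos : (0:ℝ) < 2^n := by positivity
      have hs := step (t1 * 2^n) (le_mul_of_one_le_right ht1pos.le h2n)
      have hrw : t1 * 2^n * 2 = t1 * 2^(n+1) := by ring
      rw [hrw] at hs
      have hsplit : ∀ p : ℝ, ((2:ℝ)^(n+1)) ^ p = ((2:ℝ)^n) ^ p * (2:ℝ) ^ p := by
        intro p
        rw [pow_succ, Real.mul_rpow h2npos.le (by norm_num)]
      constructor
      · calc G t1 * ((2:ℝ)^(n+1)) ^ (-(ξ+ε))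
            = (G t1 * ((2:ℝ)^n) ^ (-(ξ+ε))) * 2 ^ (-(ξ+ε)) := by rw [hsplit]; ring
          _ ≤ G (t1 * 2^n) * 2 ^ (-(ξ+ε)) := by
              apply mul_le_mul_of_nonneg_right ih.1 (Real.rpow_nonneg (by norm_num) _)
          _ ≤ G (t1 * 2^(n+1)) := hs.1
      · calc G (t1 * 2^(n+1)) ≤ G (t1 * 2^n) * 2 ^ (-(ξ-ε)) := hs.2
          _ ≤ (G t1 * ((2:ℝ)^n) ^ (-(ξ-ε))) * 2 ^ (-(ξ-ε)) := by
              apply mul_le_mul_of_nonneg_right ih.2 (Real.rpow_nonneg (by norm_num) _)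
          _ = G t1 * ((2:ℝ)^(n+1)) ^ (-(ξ-ε)) := by rw [hsplit]; ring
  refine ⟨G t1 * (2/t1) ^ (-(ξ+ε)), G t1 * (2*t1) ^ (ξ-ε), t1, by positivity, by positivity,
    ht1ge, ?_⟩
  intro x hx
  have hxpos : 0 < x := lt_of_lt_of_le ht1pos hx
  have hq : 1 ≤ x / t1 := (one_le_div ht1pos).2 hx
  set n : ℕ := ⌊Real.logb 2 (x / t1)⌋₊ with hn
  have hlb : 0 ≤ Real.logb 2 (x/t1) := Real.logb_nonneg one_lt_two hq
  have hxt1 : (0:ℝ) < x / t1 := by positivity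
  have h1 : (2:ℝ)^(n:ℕ) ≤ x / t1 := by
    have : (2:ℝ)^(n:ℝ) ≤ 2 ^ Real.logb 2 (x/t1) :=
      Real.rpow_le_rpow_of_exponent_le one_le_two (Nat.floor_le hlb)
    rwa [Real.rpow_logb two_pos (by norm_num) hxt1, Real.rpow_natCast] at this
  have h2' : x / t1 < (2:ℝ)^(n+1:ℕ) := by
    have : (2:ℝ) ^ Real.logb 2 (x/t1) < 2 ^ ((n:ℝ)+1) :=
      Real.rpow_lt_rpow_of_exponent_lt one_lt_two (Nat.lt_floor_add_one _)
    rw [Real.rpow_logb two_pos (by norm_num) hxt1] at this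
    calc x / t1 < (2:ℝ) ^ ((n:ℝ)+1) := this
      _ = (2:ℝ)^(n+1:ℕ) := by rw [← Real.rpow_natCast]; push_cast; ring_nf
  have hle1 : t1 * 2^n ≤ x := by
    rw [mul_comm]
    exact (le_div_iff₀ ht1pos).1 h1
  have hle2 : x ≤ t1 * 2^(n+1) := by
    rw [mul_comm]
    exact le_of_lt ((div_lt_iff₀ ht1pos).1 h2')
  constructor
  · -- lower bound
    have hA : G (t1 * 2^(n+1)) ≤ G x := hanti hle2
    have hB := (ind (n+1)).1
    have hC : ((2:ℝ)*x/t1) ^ (-(ξ+ε)) ≤ ((2:ℝ)^(n+1)) ^ (-(ξ+ε)) := by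
      apply Real.rpow_le_rpow_of_nonpos (by positivity)
      · calc (2:ℝ)^(n+1) = 2^n * 2 := by ring
          _ ≤ (x/t1) * 2 := by nlinarith
          _ = 2*x/t1 := by ring
      · linarith
    have hD : (2*x/t1 : ℝ) ^ (-(ξ+ε)) = (2/t1) ^ (-(ξ+ε)) * x ^ (-(ξ+ε)) := by
      rw [show (2*x/t1 : ℝ) = (2/t1) * x by ring,
        Real.mul_rpow (by positivity) hxpos.le]
    calc G t1 * (2/t1) ^ (-(ξ+ε)) * x ^ (-(ξ+ε))
        = G t1 * ((2*x/t1) ^ (-(ξ+ε))) := by rw [hD]; ring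
      _ ≤ G t1 * ((2:ℝ)^(n+1)) ^ (-(ξ+ε)) := by
          apply mul_le_mul_of_nonneg_left hC hGt1pos.le
      _ ≤ G (t1 * 2^(n+1)) := hB
      _ ≤ G x := hA
  · -- upper bound
    have hA : G x ≤ G (t1 * 2^n) := hanti hle1
    have hB := (ind n).2
    have hC : ((2:ℝ)^n) ^ (-(ξ-ε)) ≤ (x/(2*t1)) ^ (-(ξ-ε)) := by
      apply Real.rpow_le_rpow_of_nonpos (by positivity)
      · calc x/(2*t1) = (x/t1)/2 := by ring
          _ ≤ 2^(n+1)/2 := by nlinarith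
          _ = 2^n := by ring
      · linarith
    have hD : (x/(2*t1) : ℝ) ^ (-(ξ-ε)) = (2*t1) ^ (ξ-ε) * x ^ (-(ξ-ε)) := by
      rw [Real.div_rpow hxpos.le (by positivity), Real.rpow_neg hxpos.le,
        Real.rpow_neg (by positivity : (0:ℝ) ≤ 2*t1)]
      field_simp
    calc G x ≤ G (t1 * 2^n) := hA
      _ ≤ G t1 * ((2:ℝ)^n) ^ (-(ξ-ε)) := hB
      _ ≤ G t1 * (x/(2*t1)) ^ (-(ξ-ε)) := mul_le_mul_of_nonneg_left hC hGt1pos.le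
      _ = G t1 * (2*t1) ^ (ξ-ε) * x ^ (-(ξ-ε)) := by rw [hD]; ring

lemma integrand_pos (γ c r h y : ℝ) (hch : 0 < c*h) (hy : 0 < y) :
    0 < (1 + y ^ (1-γ) / (c*h)) ^ (-r) := by
  have h1 : 0 < y ^ (1-γ) := Real.rpow_pos_of_pos hy _
  have h2 : 0 < y ^ (1-γ) / (c*h) := div_pos h1 hch
  exact Real.rpow_pos_of_pos (by linarith) _

lemma integrand_le_one (γ c r h y : ℝ) (hch : 0 < c*h) (hrpos : 0 < r) (hy : 0 < y) :
    (1 + y ^ (1-γ) / (c*h)) ^ (-r) ≤ 1 := by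
  have h1 : 0 < y ^ (1-γ) := Real.rpow_pos_of_pos hy _
  have h2 : 0 < y ^ (1-γ) / (c*h) := div_pos h1 hch
  exact Real.rpow_le_one_of_one_le_of_nonpos (by linarith) (by linarith)

lemma integrand_bound (γ c r h y a : ℝ) (hγ : 1 < γ) (hch : 0 < c*h) (hrpos : 0 < r)
    (hy : 0 < y) (ha : 0 < a) (hya : y ≤ a) :
    (1 + y ^ (1-γ) / (c*h)) ^ (-r) ≤ (a ^ (1-γ) / (c*h)) ^ (-r) := by
  have h1 : 0 < a ^ (1-γ) / (c*h) := div_pos (Real.rpow_pos_of_pos ha _) hch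
  have h2 : 0 < y ^ (1-γ) / (c*h) := div_pos (Real.rpow_pos_of_pos hy _) hch
  apply Real.rpow_le_rpow_of_nonpos h1 _ (by linarith)
  have h3 : a ^ (1-γ) ≤ y ^ (1-γ) := Real.rpow_le_rpow_of_nonpos hy hya (by linarith)
  have h4 : a ^ (1-γ) / (c*h) ≤ y ^ (1-γ) / (c*h) := by gcongr
  linarith

lemma s_spec (γ c h : ℝ) (hγ : 1 < γ) (hch : 0 < c*h) :
    ((c*h) ^ (-(1/(γ-1)))) ^ (1-γ) = c*h := by
  have hγ1 : γ - 1 ≠ 0 := sub_ne_zero.mpr hγ.ne'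
  rw [← Real.rpow_mul hch.le]
  have : -(1/(γ-1)) * (1-γ) = 1 := by field_simp; ring
  rw [this, Real.rpow_one]

lemma shell_bound (γ c r h δ : ℝ) (u y : ℝ) (hγ : 1 < γ) (hch : 0 < c*h) (hh : 0 < h)
    (hrpos : 0 < r) (hy : 0 < y) (hle : y ≤ h ^ u * (c*h) ^ (-(1/(γ-1)))) :
    (1 + y ^ (1-γ) / (c*h)) ^ (-r) ≤ h ^ (u*((γ-1)*r)) := by
  set s : ℝ := (c*h) ^ (-(1/(γ-1))) with hs
  have hspos : 0 < s := Real.rpow_pos_of_pos hch _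
  have hupos : 0 < h ^ u := Real.rpow_pos_of_pos hh _
  have hapos : 0 < h ^ u * s := mul_pos hupos hspos
  have h1 := integrand_bound γ c r h y (h ^ u * s) hγ hch hrpos hy hapos hle
  have h2 : (h ^ u * s) ^ (1-γ) = h ^ (u*(1-γ)) * (c*h) := by
    rw [Real.mul_rpow hupos.le hspos.le, ← Real.rpow_mul hh.le, hs, s_spec γ c h hγ hch]
  have h3 : (h ^ u * s) ^ (1-γ) / (c*h) = h ^ (u*(1-γ)) := by
    rw [h2, mul_div_assoc, div_self hch.ne', mul_one]
  calc (1 + y ^ (1-γ) / (c*h)) ^ (-r) ≤ ((h ^ u * s) ^ (1-γ) / (c*h)) ^ (-r) := h1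
    _ = (h ^ (u*(1-γ))) ^ (-r) := by rw [h3]
    _ = h ^ (u*(1-γ) * (-r)) := (Real.rpow_mul hh.le _ _).symm
    _ = h ^ (u*((γ-1)*r)) := by congr 1; ring

lemma integrand_meas {Ω : Type*} [MeasurableSpace Ω] (Y : Ω → ℝ) (hY : Measurable Y)
    (γ c r h : ℝ) : Measurable (fun ω => (1 + Y ω ^ (1-γ) / (c*h)) ^ (-r)) := by
  measurability

lemma integrand_integrable {Ω : Type*} [MeasurableSpace Ω] (P : Measure Ω)
    [IsProbabilityMeasure P] (Y : Ω → ℝ) (hY : Measurable Y) (hYpos : ∀ ω, 0 < Y ω)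
    (γ c r h : ℝ) (hch : 0 < c*h) (hrpos : 0 < r) :
    Integrable (fun ω => (1 + Y ω ^ (1-γ) / (c*h)) ^ (-r)) P := by
  apply (integrable_const (1:ℝ)).mono' (integrand_meas Y hY γ c r h).aestronglyMeasurable
  filter_upwards with ω
  rw [Real.norm_eq_abs, abs_of_pos (integrand_pos γ c r h (Y ω) hch (hYpos ω))]
  exact integrand_le_one γ c r h (Y ω) hch hrpos (hYpos ω)

lemma integral_lower {Ω : Type*} [MeasurableSpace Ω] (P : Measure Ω) [IsProbabilityMeasure P]
    (Y : Ω → ℝ) (hY : Measurable Y) (hYpos : ∀ ω, 0 < Y ω)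
    (γ c r h : ℝ) (hγ : 1 < γ) (hc : 0 < c) (hrpos : 0 < r) (hh : 0 < h) :
    (2:ℝ) ^ (-r) * (P {ω | (c*h) ^ (-(1/(γ-1))) < Y ω}).toReal
      ≤ ∫ ω, (1 + Y ω ^ (1-γ) / (c*h)) ^ (-r) ∂P := by
  have hch : 0 < c*h := by positivity
  have hspos : 0 < (c*h) ^ (-(1/(γ-1))) := Real.rpow_pos_of_pos hch _
  have hint := integrand_integrable P Y hY hYpos γ c r h hch hrpos
  have hset : MeasurableSet {ω | (c*h) ^ (-(1/(γ-1))) < Y ω} :=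
    measurableSet_lt measurable_const hY
  calc (2:ℝ) ^ (-r) * (P {ω | (c*h) ^ (-(1/(γ-1))) < Y ω}).toReal
      ≤ ∫ ω in {ω | (c*h) ^ (-(1/(γ-1))) < Y ω}, (1 + Y ω ^ (1-γ) / (c*h)) ^ (-r) ∂P := by
        apply setIntegral_ge_of_const_le_real hset (measure_ne_top P _) ?_ hint.integrableOn
        intro ω hω
        have hYω := hYpos ω
        have h1 : Y ω ^ (1-γ) ≤ ((c*h) ^ (-(1/(γ-1)))) ^ (1-γ) :=
          Real.rpow_le_rpow_of_nonpos hspos (le_of_lt hω) (by linarith)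
        rw [s_spec γ c h hγ hch] at h1
        have h2 : Y ω ^ (1-γ) / (c*h) ≤ 1 := by rw [div_le_one hch]; exact h1
        have h3 : 0 < Y ω ^ (1-γ) / (c*h) := div_pos (Real.rpow_pos_of_pos hYω _) hch
        have h4 : 1 + Y ω ^ (1-γ)/(c*h) ≤ 2 := by linarith
        exact Real.rpow_le_rpow_of_nonpos (by linarith) h4 (by linarith)
    _ ≤ ∫ ω, (1 + Y ω ^ (1-γ) / (c*h)) ^ (-r) ∂P := by
        apply setIntegral_le_integral hint
        filter_upwards with ω
        exact (integrand_pos γ c r h (Y ω) hch (hYpos ω)).le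

lemma integral_upper {Ω : Type*} [MeasurableSpace Ω] (P : Measure Ω) [IsProbabilityMeasure P]
    (Y : Ω → ℝ) (hY : Measurable Y) (hYpos : ∀ ω, 0 < Y ω)
    (γ c r h δ : ℝ) (N : ℕ) (hγ : 1 < γ) (hc : 0 < c) (hrpos : 0 < r) (hh : 0 < h) :
    ∫ ω, (1 + Y ω ^ (1-γ) / (c*h)) ^ (-r) ∂P ≤
      (∑ k ∈ Finset.range N, h ^ ((δ*k)*((γ-1)*r)) *
        (P {ω | h ^ (δ*((k:ℝ)+1)) * (c*h) ^ (-(1/(γ-1))) < Y ω}).toReal)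
      + (P {ω | (c*h) ^ (-(1/(γ-1))) < Y ω}).toReal + h ^ ((δ*N)*((γ-1)*r)) := by
  classical
  have hch : 0 < c*h := by positivity
  have hmset : ∀ b : ℝ, MeasurableSet {ω | b < Y ω} :=
    fun b => measurableSet_lt measurable_const hY
  set s : ℝ := (c*h) ^ (-(1/(γ-1))) with hs
  have hspos : 0 < s := Real.rpow_pos_of_pos hch _
  set g : Ω → ℝ := fun ω =>
    (∑ k ∈ Finset.range N, h ^ ((δ*k)*((γ-1)*r)) *
      ({ω' | h ^ (δ*((k:ℝ)+1)) * s < Y ω'}.indicator (fun _ => (1:ℝ)) ω))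
    + {ω' | s < Y ω'}.indicator (fun _ => (1:ℝ)) ω + h ^ ((δ*N)*((γ-1)*r)) with hg
  have hint := integrand_integrable P Y hY hYpos γ c r h hch hrpos
  have hint_sum : Integrable (fun ω => ∑ k ∈ Finset.range N, h ^ ((δ*k)*((γ-1)*r)) *
      ({ω' | h ^ (δ*((k:ℝ)+1)) * s < Y ω'}.indicator (fun _ => (1:ℝ)) ω)) P := by
    apply integrable_finset_sum
    intro k _
    exact (((integrable_const (1:ℝ)).indicator (hmset _))).const_mul _
  have hint_ind : Integrable (fun ω => {ω' | s < Y ω'}.indicator (fun _ => (1:ℝ)) ω) P :=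
    (integrable_const (1:ℝ)).indicator (hmset _)
  have hint_g : Integrable g P := ((hint_sum.add hint_ind).add (integrable_const _))
  have hpoint : ∀ ω, (1 + Y ω ^ (1-γ) / (c*h)) ^ (-r) ≤ g ω := by
    intro ω
    have hy := hYpos ω
    have hsum_nn : 0 ≤ ∑ k ∈ Finset.range N, h ^ ((δ*k)*((γ-1)*r)) *
        ({ω' | h ^ (δ*((k:ℝ)+1)) * s < Y ω'}.indicator (fun _ => (1:ℝ)) ω) := by
      apply Finset.sum_nonneg
      intro k _
      exact mul_nonneg (Real.rpow_nonneg hh.le _)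
        (Set.indicator_nonneg (fun _ _ => zero_le_one) ω)
    have hind_nn : 0 ≤ {ω' | s < Y ω'}.indicator (fun _ => (1:ℝ)) ω :=
      Set.indicator_nonneg (fun _ _ => zero_le_one) ω
    have hlast_nn : 0 ≤ h ^ ((δ*N)*((γ-1)*r)) := Real.rpow_nonneg hh.le _
    simp only [hg]
    by_cases hcase : s < Y ω
    · have hind1 : {ω' | s < Y ω'}.indicator (fun _ => (1:ℝ)) ω = 1 :=
        Set.indicator_of_mem (show ω ∈ {ω' | s < Y ω'} from hcase) (fun _ => (1:ℝ))
      have hf1 := integrand_le_one γ c r h (Y ω) hch hrpos hy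
      rw [hind1]
      linarith
    · push_neg at hcase
      by_cases hPN : Y ω ≤ h ^ (δ*(N:ℝ)) * s
      · have hfb := shell_bound γ c r h δ (δ*(N:ℝ)) (Y ω) hγ hch hh hrpos hy hPN
        linarith
      · push_neg at hPN
        set Pk : ℕ → Prop := fun j => Y ω ≤ h ^ (δ*(j:ℝ)) * s with hPk
        have hP0 : Pk 0 := by
          simp only [hPk, Nat.cast_zero, mul_zero, Real.rpow_zero, one_mul]
          exact hcase
        have hPN' : ¬ Pk N := not_le.2 hPN
        set k := Nat.findGreatest Pk N with hk
        have hkspec : Pk k := Nat.findGreatest_spec (Nat.zero_le N) hP0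
        have hkle : k ≤ N := Nat.findGreatest_le N
        have hklt : k < N := lt_of_le_of_ne hkle (fun h' => hPN' (h' ▸ hkspec))
        have hnot : ¬ Pk (k+1) := Nat.findGreatest_is_greatest (Nat.lt_succ_self k) hklt
        simp only [hPk, not_le, Nat.cast_add, Nat.cast_one] at hnot
        have hmem : ω ∈ {ω' | h ^ (δ*((k:ℝ)+1)) * s < Y ω'} := hnot
        have hfb := shell_bound γ c r h δ (δ*(k:ℝ)) (Y ω) hγ hch hh hrpos hy hkspec
        have hterm : h ^ ((δ*k)*((γ-1)*r)) *
            ({ω' | h ^ (δ*((k:ℝ)+1)) * s < Y ω'}.indicator (fun _ => (1:ℝ)) ω)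
            = h ^ ((δ*k)*((γ-1)*r)) := by
          rw [Set.indicator_of_mem hmem]; exact mul_one _
        have hsum_ge : h ^ ((δ*k)*((γ-1)*r)) ≤ ∑ j ∈ Finset.range N, h ^ ((δ*j)*((γ-1)*r)) *
            ({ω' | h ^ (δ*((j:ℝ)+1)) * s < Y ω'}.indicator (fun _ => (1:ℝ)) ω) := by
          rw [← hterm]
          exact Finset.single_le_sum (f := fun j : ℕ => h ^ ((δ*j)*((γ-1)*r)) *
            ({ω' | h ^ (δ*((j:ℝ)+1)) * s < Y ω'}.indicator (fun _ => (1:ℝ)) ω)) (a := k)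
            (fun i _ => mul_nonneg (Real.rpow_nonneg hh.le _)
              (Set.indicator_nonneg (fun _ _ => zero_le_one) ω))
            (Finset.mem_range.2 hklt)
        linarith
  have hgint_eq : ∫ ω, g ω ∂P =
      (∑ k ∈ Finset.range N, h ^ ((δ*k)*((γ-1)*r)) *
        (P {ω | h ^ (δ*((k:ℝ)+1)) * s < Y ω}).toReal)
      + (P {ω | s < Y ω}).toReal + h ^ ((δ*N)*((γ-1)*r)) := by
    have hint_si : Integrable (fun ω => (∑ k ∈ Finset.range N, h ^ ((δ*k)*((γ-1)*r)) *
        ({ω' | h ^ (δ*((k:ℝ)+1)) * s < Y ω'}.indicator (fun _ => (1:ℝ)) ω))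
        + {ω' | s < Y ω'}.indicator (fun _ => (1:ℝ)) ω) P := hint_sum.add hint_ind
    rw [hg]
    rw [integral_add hint_si (integrable_const _),
      integral_add hint_sum hint_ind, integral_finset_sum _
        (fun k _ => (((integrable_const (1:ℝ)).indicator (hmset _))).const_mul _)]
    congr 1
    · congr 1
      · apply Finset.sum_congr rfl
        intro k _
        rw [integral_const_mul, integral_indicator_const (1:ℝ) (hmset _), smul_eq_mul, mul_one, measureReal_def]
      · rw [integral_indicator_const (1:ℝ) (hmset _), smul_eq_mul, mul_one, measureReal_def]
    · simp
  calc ∫ ω, (1 + Y ω ^ (1-γ) / (c*h)) ^ (-r) ∂P ≤ ∫ ω, g ω ∂P :=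
        integral_mono hint hint_g hpoint
    _ = _ := hgint_eq

section
variable {Ω : Type*}

set_option maxHeartbeats 2000000 in
theorem stmt_19' [MeasurableSpace Ω] (P : Measure Ω) [IsProbabilityMeasure P]
    (Y : Ω → ℝ) (hY : Measurable Y) (hYpos : ∀ ω, 0 < Y ω)
    (ξ : ℝ) (hξ : 0 < ξ)
    (hpos : ∀ x : ℝ, 0 < x → 0 < (P {ω | x < Y ω}).toReal)
    (hRV : ∀ x : ℝ, 0 < x →
      Tendsto (fun t => (P {ω | t * x < Y ω}).toReal / (P {ω | t < Y ω}).toReal)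
        atTop (nhds (x ^ (-ξ))))
    (γ c r : ℝ) (hγ : 1 < γ) (hc : 0 < c) (hr : ξ / (γ - 1) < r) :
    Tendsto
      (fun h => Real.log (∫ ω, (1 + Y ω ^ (1 - γ) / (c * h)) ^ (-r) ∂P) / Real.log h)
      (nhdsWithin 0 (Set.Ioi 0)) (nhds (ξ / (γ - 1))) := by
  have hγ1 : (0:ℝ) < γ - 1 := by linarith
  have hβpos : 0 < ξ / (γ-1) := div_pos hξ hγ1
  have hrpos : 0 < r := lt_trans hβpos hr
  have hξr : ξ < (γ-1)*r := by rw [div_lt_iff₀ hγ1] at hr; linarith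
  set β := ξ / (γ-1) with hβ
  set T : ℝ := (ξ/((γ-1)^2*r) + 1/(γ-1))/2 with hT
  have ha_pos : 0 < ξ/((γ-1)^2*r) := by positivity
  have hab : ξ/((γ-1)^2*r) < 1/(γ-1) := by
    rw [div_lt_div_iff₀ (by positivity) hγ1]
    have h1 := mul_lt_mul_of_pos_right hξr hγ1
    have h2 : (γ-1)*r*(γ-1) = 1*((γ-1)^2*r) := by ring
    linarith
  have hTpos : 0 < T := by rw [hT]; linarith
  have hTlt : T < 1/(γ-1) := by rw [hT]; linarith
  have hTgt : ξ/((γ-1)^2*r) < T := by rw [hT]; linarith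
  have hTr : β < T*((γ-1)*r) := by
    have h1 : (ξ/((γ-1)^2*r)) * ((γ-1)*r) = β := by rw [hβ]; field_simp
    calc β = (ξ/((γ-1)^2*r)) * ((γ-1)*r) := h1.symm
      _ < T*((γ-1)*r) := mul_lt_mul_of_pos_right hTgt (by positivity)
  have hanti : Antitone (fun x : ℝ => (P {ω | x < Y ω}).toReal) := by
    intro a b hab'
    exact ENNReal.toReal_mono (measure_ne_top P _)
      (measure_mono (fun ω hω => lt_of_le_of_lt hab' hω))
  have h2RV : Tendsto (fun t => (fun x : ℝ => (P {ω | x < Y ω}).toReal) (t*2)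
      / (fun x : ℝ => (P {ω | x < Y ω}).toReal) t) atTop (nhds ((2:ℝ) ^ (-ξ))) := hRV 2 two_pos
  rw [Metric.tendsto_nhds]
  intro ε hε
  set ε' : ℝ := min (ξ/2) ((γ-1)*ε/4) with hε'
  have hε'pos : 0 < ε' := lt_min (by linarith) (by positivity)
  have hε'ξ : ε' < ξ := lt_of_le_of_lt (min_le_left _ _) (by linarith)
  have hε'γ : ε'/(γ-1) ≤ ε/4 := by
    rw [div_le_iff₀ hγ1]
    calc ε' ≤ (γ-1)*ε/4 := min_le_right _ _
      _ = ε/4*(γ-1) := by ring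
  obtain ⟨Cl, Cu, x0, hClpos, hCupos, hx0, hbounds⟩ :=
    tail_pow_bounds (fun x : ℝ => (P {ω | x < Y ω}).toReal) hanti hpos hξ h2RV hε'pos hε'ξ
  set N : ℕ := ⌈4*ξ*T/ε⌉₊ + 1 with hN
  have hNpos0 : 0 < N := Nat.succ_pos _
  have hNpos : 0 < (N:ℝ) := Nat.cast_pos.2 hNpos0
  set δ : ℝ := T / N with hδ
  have hδpos : 0 < δ := div_pos hTpos hNpos
  have hδN : δ * N = T := by rw [hδ]; field_simp
  have hδξ : δ * ξ ≤ ε/4 := by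
    have h1 : 4*ξ*T/ε ≤ (N:ℝ) := by
      rw [hN]; push_cast
      linarith [Nat.le_ceil (4*ξ*T/ε)]
    have h2 : 4*ξ*T ≤ (N:ℝ)*ε := by
      rw [div_le_iff₀ hε] at h1; linarith
    rw [hδ, div_mul_eq_mul_div, div_le_iff₀ hNpos]
    linarith
  set p1 : ℝ := (ξ+ε')/(γ-1) with hp1
  set β' : ℝ := (ξ-ε')/(γ-1) with hβ'
  set m : ℝ := β' - δ*ξ with hm
  have hβ'β : β' ≤ β := by rw [hβ', hβ]; gcongr <;> linarith
  have hmβ' : m ≤ β' := by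
    have h1 : 0 < δ*ξ := mul_pos hδpos hξ
    rw [hm]; linarith
  have hp1b : p1 - β ≤ ε/4 := by
    have h1 : p1 - β = ε'/(γ-1) := by rw [hp1, hβ]; ring
    linarith
  have hβm : β - m ≤ ε/2 := by
    have h1 : β - m = ε'/(γ-1) + δ*ξ := by rw [hm, hβ', hβ]; ring
    linarith
  set Cc : ℝ := Cu * c ^ β' with hCc
  have hCcpos : 0 < Cc := mul_pos hCupos (Real.rpow_pos_of_pos hc _)
  set Ku : ℝ := N*Cc + Cc + 1 with hKu
  have hKupos : 0 < Ku := by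
    have h1 : 0 ≤ (N:ℝ)*Cc := mul_nonneg hNpos.le hCcpos.le
    rw [hKu]; linarith
  set Kl : ℝ := 2^(-r) * Cl * c ^ p1 with hKl
  have hKlpos : 0 < Kl :=
    mul_pos (mul_pos (Real.rpow_pos_of_pos two_pos _) hClpos) (Real.rpow_pos_of_pos hc _)
  -- eventual conditions
  have hlog_tendsto : ∀ K : ℝ, Tendsto (fun h : ℝ => Real.log K / Real.log h)
      (nhdsWithin 0 (Set.Ioi 0)) (nhds 0) := by
    intro K
    have h1 : Tendsto (fun h : ℝ => -Real.log h) (nhdsWithin 0 (Set.Ioi 0)) atTop :=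
      tendsto_neg_atBot_atTop.comp Real.tendsto_log_nhdsGT_zero
    have h2 := Filter.Tendsto.div_atTop
      (tendsto_const_nhds : Tendsto (fun _ : ℝ => -Real.log K) _ (nhds (-Real.log K))) h1
    exact h2.congr (fun x => neg_div_neg_eq _ _)
  have E2 := (Metric.tendsto_nhds.1 (hlog_tendsto Kl)) (ε/4) (by linarith)
  have E3 := (Metric.tendsto_nhds.1 (hlog_tendsto Ku)) (ε/4) (by linarith)
  have hρ : 0 < 1/(γ-1) - T := by linarith
  have hthr : Tendsto (fun h : ℝ => c ^ (-(1/(γ-1))) * h ^ (T - 1/(γ-1)))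
      (nhdsWithin 0 (Set.Ioi 0)) atTop := by
    apply Tendsto.const_mul_atTop (Real.rpow_pos_of_pos hc _)
    refine Filter.Tendsto.congr' ?_ ((tendsto_rpow_atTop hρ).comp tendsto_inv_nhdsGT_zero)
    filter_upwards [self_mem_nhdsWithin] with x hx
    have hx' : (0:ℝ) < x := hx
    simp only [Function.comp_apply]
    rw [Real.inv_rpow hx'.le, ← Real.rpow_neg hx'.le]
    congr 1; ring
  have E1 : ∀ᶠ h in nhdsWithin 0 (Set.Ioi 0), x0 ≤ c ^ (-(1/(γ-1))) * h ^ (T - 1/(γ-1)) :=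
    hthr.eventually_ge_atTop x0
  have E0 : Set.Ioo (0:ℝ) 1 ∈ nhdsWithin 0 (Set.Ioi 0) :=
    Ioo_mem_nhdsGT_of_mem ⟨le_refl 0, one_pos⟩
  filter_upwards [E0, E1, E2, E3] with h hh01 hthr1 hKl1 hKu1
  obtain ⟨hhpos, hh1⟩ := hh01
  have hch : 0 < c*h := mul_pos hc hhpos
  set s : ℝ := (c*h) ^ (-(1/(γ-1))) with hsdef
  have hspos : 0 < s := Real.rpow_pos_of_pos hch _
  have hlogh : Real.log h < 0 := Real.log_neg hhpos hh1
  have hloghne : Real.log h ≠ 0 := ne_of_lt hlogh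
  have hTs : h ^ T * s = c ^ (-(1/(γ-1))) * h ^ (T - 1/(γ-1)) := by
    rw [hsdef, Real.mul_rpow hc.le hhpos.le,
      show T - 1/(γ-1) = T + (-(1/(γ-1))) by ring, Real.rpow_add hhpos]
    ring
  have hthr2 : x0 ≤ h ^ T * s := by rw [hTs]; exact hthr1
  have hsx0 : x0 ≤ s := by
    have h1 : h ^ T ≤ 1 := Real.rpow_le_one hhpos.le hh1.le hTpos.le
    calc x0 ≤ h ^ T * s := hthr2
      _ ≤ 1 * s := mul_le_mul_of_nonneg_right h1 hspos.le
      _ = s := one_mul s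
  have hsq : ∀ q : ℝ, s ^ (-q) = c ^ (q/(γ-1)) * h ^ (q/(γ-1)) := by
    intro q
    rw [hsdef, ← Real.rpow_mul hch.le, show -(1/(γ-1)) * (-q) = q/(γ-1) by ring,
      Real.mul_rpow hc.le hhpos.le]
  -- lower bound
  have hLB := integral_lower P Y hY hYpos γ c r h hγ hc hrpos hhpos
  have hGs := (hbounds s hsx0).1
  have hlow : Kl * h ^ p1 ≤ ∫ ω, (1 + Y ω ^ (1-γ)/(c*h)) ^ (-r) ∂P := by
    have h2 : s ^ (-(ξ+ε')) = c ^ p1 * h ^ p1 := by rw [hp1]; exact hsq (ξ+ε')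
    calc Kl * h ^ p1 = 2^(-r) * (Cl * (c ^ p1 * h ^ p1)) := by rw [hKl]; ring
      _ = 2^(-r) * (Cl * s ^ (-(ξ+ε'))) := by rw [h2]
      _ ≤ 2^(-r) * (P {ω | s < Y ω}).toReal :=
          mul_le_mul_of_nonneg_left hGs (Real.rpow_nonneg (by norm_num) _)
      _ ≤ _ := hLB
  -- upper bound
  have hUB := integral_upper P Y hY hYpos γ c r h δ N hγ hc hrpos hhpos
  have hshell : ∀ k : ℕ, k < N → h ^ ((δ*k)*((γ-1)*r)) *
      (P {ω | h ^ (δ*((k:ℝ)+1)) * s < Y ω}).toReal ≤ Cc * h ^ m := by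
    intro k hk
    set A : ℝ := h ^ (δ*((k:ℝ)+1)) * s with hA
    have hApos : 0 < A := mul_pos (Real.rpow_pos_of_pos hhpos _) hspos
    have hAx0 : x0 ≤ A := by
      have hkN : ((k:ℝ)+1) ≤ (N:ℝ) := by
        exact_mod_cast Nat.succ_le_of_lt hk
      have h1 : δ*((k:ℝ)+1) ≤ T := by
        rw [← hδN]
        exact mul_le_mul_of_nonneg_left hkN hδpos.le
      have h2 : h ^ T ≤ h ^ (δ*((k:ℝ)+1)) :=
        Real.rpow_le_rpow_of_exponent_ge hhpos hh1.le h1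
      calc x0 ≤ h ^ T * s := hthr2
        _ ≤ A := by rw [hA]; exact mul_le_mul_of_nonneg_right h2 hspos.le
    have hGA := (hbounds A hAx0).2
    have hApow : A ^ (-(ξ-ε')) = h ^ ((δ*((k:ℝ)+1)) * (-(ξ-ε')))
        * (c ^ ((ξ-ε')/(γ-1)) * h ^ ((ξ-ε')/(γ-1))) := by
      rw [hA, Real.mul_rpow (Real.rpow_nonneg hhpos.le _) hspos.le,
        ← Real.rpow_mul hhpos.le, hsq]
    have he : m ≤ (δ*k)*((γ-1)*r) + ((δ*((k:ℝ)+1)) * (-(ξ-ε')) + (ξ-ε')/(γ-1)) := by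
      rw [hm, hβ']
      have hk0 : (0:ℝ) ≤ k := Nat.cast_nonneg k
      have t1 : (0:ℝ) ≤ δ*k*((γ-1)*r - (ξ-ε')) :=
        mul_nonneg (mul_nonneg hδpos.le hk0) (by linarith)
      have t2 : (0:ℝ) < δ*ε' := mul_pos hδpos hε'pos
      have key : (δ*k)*((γ-1)*r) + ((δ*((k:ℝ)+1)) * (-(ξ-ε')) + (ξ-ε')/(γ-1))
          - ((ξ-ε')/(γ-1) - δ*ξ) = δ*k*((γ-1)*r - (ξ-ε')) + δ*ε' := by ring
      linarith
    calc h ^ ((δ*k)*((γ-1)*r)) * (P {ω | A < Y ω}).toReal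
        ≤ h ^ ((δ*k)*((γ-1)*r)) * (Cu * A ^ (-(ξ-ε'))) :=
          mul_le_mul_of_nonneg_left hGA (Real.rpow_nonneg hhpos.le _)
      _ = Cc * (h ^ ((δ*k)*((γ-1)*r)) * (h ^ ((δ*((k:ℝ)+1)) * (-(ξ-ε')))
            * h ^ ((ξ-ε')/(γ-1)))) := by
          rw [hApow, hCc, hβ']; ring
      _ = Cc * h ^ ((δ*k)*((γ-1)*r) + ((δ*((k:ℝ)+1)) * (-(ξ-ε')) + (ξ-ε')/(γ-1))) := by
          rw [← Real.rpow_add hhpos, ← Real.rpow_add hhpos]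
      _ ≤ Cc * h ^ m := by
          apply mul_le_mul_of_nonneg_left _ hCcpos.le
          exact Real.rpow_le_rpow_of_exponent_ge hhpos hh1.le he
  have hsum_bound : (∑ k ∈ Finset.range N, h ^ ((δ*k)*((γ-1)*r)) *
      (P {ω | h ^ (δ*((k:ℝ)+1)) * s < Y ω}).toReal) ≤ N * (Cc * h ^ m) := by
    calc (∑ k ∈ Finset.range N, h ^ ((δ*k)*((γ-1)*r)) *
        (P {ω | h ^ (δ*((k:ℝ)+1)) * s < Y ω}).toReal)
        ≤ ∑ _k ∈ Finset.range N, Cc * h ^ m :=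
          Finset.sum_le_sum (fun k hk => hshell k (Finset.mem_range.1 hk))
      _ = N * (Cc * h ^ m) := by
          rw [Finset.sum_const, Finset.card_range, nsmul_eq_mul]
  have hGs2 := (hbounds s hsx0).2
  have htop : (P {ω | s < Y ω}).toReal ≤ Cc * h ^ m := by
    calc (P {ω | s < Y ω}).toReal ≤ Cu * s ^ (-(ξ-ε')) := hGs2
      _ = Cc * h ^ ((ξ-ε')/(γ-1)) := by rw [hsq, hCc, hβ']; ring
      _ ≤ Cc * h ^ m := by
          apply mul_le_mul_of_nonneg_left _ hCcpos.le
          exact Real.rpow_le_rpow_of_exponent_ge hhpos hh1.le hmβ'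
  have hlast : h ^ ((δ*N)*((γ-1)*r)) ≤ h ^ m := by
    apply Real.rpow_le_rpow_of_exponent_ge hhpos hh1.le
    rw [show (δ*(N:ℝ))*((γ-1)*r) = T*((γ-1)*r) by rw [hδN]]
    calc m ≤ β' := hmβ'
      _ ≤ β := hβ'β
      _ ≤ T*((γ-1)*r) := hTr.le
  have hup : ∫ ω, (1 + Y ω ^ (1-γ)/(c*h)) ^ (-r) ∂P ≤ Ku * h ^ m := by
    calc ∫ ω, (1 + Y ω ^ (1-γ)/(c*h)) ^ (-r) ∂P
        ≤ (∑ k ∈ Finset.range N, h ^ ((δ*k)*((γ-1)*r)) *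
            (P {ω | h ^ (δ*((k:ℝ)+1)) * s < Y ω}).toReal)
          + (P {ω | s < Y ω}).toReal + h ^ ((δ*N)*((γ-1)*r)) := hUB
      _ ≤ N * (Cc * h ^ m) + Cc * h ^ m + h ^ m :=
          add_le_add (add_le_add hsum_bound htop) hlast
      _ = Ku * h ^ m := by rw [hKu]; ring
  set I : ℝ := ∫ ω, (1 + Y ω ^ (1-γ)/(c*h)) ^ (-r) ∂P with hI
  have hIpos : 0 < I :=
    lt_of_lt_of_le (mul_pos hKlpos (Real.rpow_pos_of_pos hhpos _)) hlow
  have l1 : Real.log Kl + p1 * Real.log h ≤ Real.log I := by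
    rw [← Real.log_rpow hhpos, ← Real.log_mul (ne_of_gt hKlpos)
      (ne_of_gt (Real.rpow_pos_of_pos hhpos _))]
    exact (Real.log_le_log_iff (mul_pos hKlpos (Real.rpow_pos_of_pos hhpos _)) hIpos).2 hlow
  have l2 : Real.log I ≤ Real.log Ku + m * Real.log h := by
    rw [← Real.log_rpow hhpos, ← Real.log_mul (ne_of_gt hKupos)
      (ne_of_gt (Real.rpow_pos_of_pos hhpos _))]
    exact (Real.log_le_log_iff hIpos (mul_pos hKupos (Real.rpow_pos_of_pos hhpos _))).2 hup
  have heq1 : (Real.log Kl + p1 * Real.log h)/Real.log h = Real.log Kl/Real.log h + p1 := by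
    rw [add_div, mul_div_assoc, div_self hloghne, mul_one]
  have heq2 : (Real.log Ku + m * Real.log h)/Real.log h = Real.log Ku/Real.log h + m := by
    rw [add_div, mul_div_assoc, div_self hloghne, mul_one]
  have d1 : Real.log I / Real.log h ≤ Real.log Kl / Real.log h + p1 := by
    rw [← heq1, div_le_div_right_of_neg hlogh]
    exact l1
  have d2 : Real.log Ku / Real.log h + m ≤ Real.log I / Real.log h := by
    rw [← heq2, div_le_div_right_of_neg hlogh]
    exact l2
  rw [Real.dist_eq, sub_zero] at hKl1 hKu1
  obtain ⟨hKl1a, hKl1b⟩ := abs_lt.1 hKl1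
  obtain ⟨hKu1a, hKu1b⟩ := abs_lt.1 hKu1
  rw [Real.dist_eq, abs_lt]
  constructor
  · linarith
  · linarith

end

/-- Scaling relation (3.16) (main9) of the paper. -/
theorem stmt_19 {Ω : Type*} [MeasurableSpace Ω] (P : Measure Ω) [IsProbabilityMeasure P]
    (Y : Ω → ℝ) (hY : Measurable Y) (hYpos : ∀ ω, 0 < Y ω)
    (ξ : ℝ) (hξ : 0 < ξ)
    (hpos : ∀ x : ℝ, 0 < x → 0 < (P {ω | x < Y ω}).toReal)
    (hRV : ∀ x : ℝ, 0 < x →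
      Tendsto (fun t => (P {ω | t * x < Y ω}).toReal / (P {ω | t < Y ω}).toReal)
        atTop (nhds (x ^ (-ξ))))
    (γ c r : ℝ) (hγ : 1 < γ) (hc : 0 < c) (hr : ξ / (γ - 1) < r) :
    Tendsto
      (fun h => Real.log (∫ ω, (1 + Y ω ^ (1 - γ) / (c * h)) ^ (-r) ∂P) / Real.log h)
      (nhdsWithin 0 (Set.Ioi 0)) (nhds (ξ / (γ - 1))) :=
  stmt_19' P Y hY hYpos ξ hξ hpos hRV γ c r hγ hc hr
end
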